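/- arXiv:1808.06091 — 3 statements merged into one kernel-verified Lean document; each statement's English description precedes it below -/
import Mathlib

section
/- Planar trinities do not have recurrent states: every connected component of the state transition graph of a planar trinity is acyclic. -/
/-!  Combinatorial trinities, Tutte matchings (states), and clock moves,
following Hine and Kálmán, "Clock theorems for triangulated surfaces".

A trinity is encoded combinatorially: `Vertex` is the set of vertices, properly
colored by `vcol` with colors `Fin 3` (0 = red, 1 = green, 2 = blue); `White`
and `Black` are the sets of white and black triangles.  Each triangle has one
vertex of each color (`wvert`, `bvert`) and one edge of each color (the edge of
color `c` being opposite the vertex of color `c`); across its edge of color `c`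
a white triangle `w` meets the black triangle `wadj w c`, and a black triangle
`b` meets the white triangle `badj b c`.  The two triangles sharing an edge of
color `c` share their vertices of the other two colors (`bvert_wadj`).
A planar trinity carries a distinguished outer white triangle (`outer = some o`);
for a toric trinity `outer = none`. -/

structure Trinity where
  Vertex : Type
  White : Type
  Black : Type
  [vertexFintype : Fintype Vertex]
  [whiteFintype : Fintype White]
  [blackFintype : Fintype Black]
  [vertexDecEq : DecidableEq Vertex]
  [whiteDecEq : DecidableEq White]
  [blackDecEq : DecidableEq Black]
  outer : Option White
  vcol : Vertex → Fin 3
  wvert : White → Fin 3 → Vertex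
  bvert : Black → Fin 3 → Vertex
  wadj : White → Fin 3 → Black
  badj : Black → Fin 3 → White
  wvert_col : ∀ w c, vcol (wvert w c) = c
  bvert_col : ∀ b c, vcol (bvert b c) = c
  badj_wadj : ∀ w c, badj (wadj w c) c = w
  wadj_badj : ∀ b c, wadj (badj b c) c = b
  bvert_wadj : ∀ w c c', c' ≠ c → bvert (wadj w c) c' = wvert w c'

attribute [instance] Trinity.vertexFintype Trinity.whiteFintype Trinity.blackFintype
  Trinity.vertexDecEq Trinity.whiteDecEq Trinity.blackDecEq

namespace Trinity

variable (T : Trinity)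

/-- `w` is the outer white triangle. -/
def IsOuter (w : T.White) : Prop := T.outer = some w

instance : DecidablePred T.IsOuter := fun w => decidable_of_iff (T.outer = some w) Iff.rfl

/-- `v` is a root, i.e. a vertex of the outer white triangle (planar case). -/
def IsRoot (v : T.Vertex) : Prop := ∃ w, T.IsOuter w ∧ ∃ c, v = T.wvert w c

/-- A Tutte matching (state): a perfect matching between the non-outer white
triangles and incident non-root vertices.  (For a toric trinity, `IsOuter` and
`IsRoot` are empty conditions, so this is a perfect matching between all white
triangles and all vertices.)  The value on the outer white triangle, if any, is
irrelevant and is normalized by `outer_spec`. -/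
structure State where
  toFun : T.White → T.Vertex
  incident : ∀ w, ∃ c, toFun w = T.wvert w c
  injOn : ∀ w w', ¬ T.IsOuter w → ¬ T.IsOuter w' → toFun w = toFun w' → w = w'
  not_root : ∀ w, ¬ T.IsOuter w → ¬ T.IsRoot (toFun w)
  surj : ∀ v, ¬ T.IsRoot v → ∃ w, ¬ T.IsOuter w ∧ toFun w = v
  outer_spec : ∀ w, T.IsOuter w → toFun w = T.wvert w 0

namespace State

variable {T}

/-- The black triangle through which the arrow representing the match of the
white triangle `w` passes: the arrow of the match `(w, s w)` crosses the edge
of `w` opposite the matched vertex `s w` (the edge of color `vcol (s w)`). -/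
def arrowBlack (s : T.State) (w : T.White) : T.Black := T.wadj w (T.vcol (s.toFun w))

/-- The black triangle `b` is empty in the state `s`: no arrow passes through it. -/
def EmptyAt (s : T.State) (b : T.Black) : Prop :=
  ∀ w, ¬ T.IsOuter w → s.arrowBlack w ≠ b

/-- `b` is a clockwise empty black triangle of `s`:  it is empty and its three
vertices are matched with the three adjacent white triangles in the clockwise
rotational pattern. -/
def IsCW (s : T.State) (b : T.Black) : Prop :=
  s.EmptyAt b ∧ ∀ c, s.toFun (T.badj b c) = T.bvert b (c + 1)

/-- `b` is a counter-clockwise empty black triangle of `s`. -/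
def IsCCW (s : T.State) (b : T.Black) : Prop :=
  s.EmptyAt b ∧ ∀ c, s.toFun (T.badj b c) = T.bvert b (c + 2)

end State

/-- The basic clockwise move (clock move) about the empty black triangle `b`,
turning it from clockwise to counter-clockwise: `t` is obtained from `s` by
changing `b`. -/
def CWMoveAt (s t : T.State) (b : T.Black) : Prop :=
  s.IsCW b ∧ (∀ c, t.toFun (T.badj b c) = T.bvert b (c + 2)) ∧
    ∀ w, (∀ c, w ≠ T.badj b c) → t.toFun w = s.toFun w

/-- A walk in the state transition graph, recording for each step the black
triangle about which the move is performed and the direction of the move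
(`true` = clockwise, `false` = counter-clockwise). -/
inductive Walk : T.State → List (T.Black × Bool) → T.State → Prop
  | nil (s : T.State) : Walk s [] s
  | cw {s t u : T.State} {b : T.Black} {l : List (T.Black × Bool)} :
      T.CWMoveAt s t b → Walk t l u → Walk s ((b, true) :: l) u
  | ccw {s t u : T.State} {b : T.Black} {l : List (T.Black × Bool)} :
      T.CWMoveAt t s b → Walk t l u → Walk s ((b, false) :: l) u

/-- Two states lie in the same connected component of the state transition
graph. -/
def Reaches (s t : T.State) : Prop := ∃ l, T.Walk s l t

/-- A walk consisting of clockwise moves only, about the listed black triangles. -/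
def CWWalk (s : T.State) (l : List T.Black) (t : T.State) : Prop :=
  T.Walk s (l.map fun b => (b, true)) t

/-- A state is recurrent if some non-empty sequence of clockwise moves starts
and ends at it. -/
def Recurrent (s : T.State) : Prop := ∃ l : List T.Black, l ≠ [] ∧ T.CWWalk s l s

/-- `s` belongs to an acyclic component of the state transition graph: no state
in its component is recurrent. -/
def InAcyclic (s : T.State) : Prop := ∀ t, T.Reaches s t → ¬ T.Recurrent t

/-- Two white triangles sharing an adjacent black triangle. -/
def WAdj (w w' : T.White) : Prop := ∃ c c', T.wadj w c = T.wadj w' c'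

/-- Rotation (by one step, in the direction induced by the orientation) of the
white triangles around the vertex `v`. -/
def rotAt (v : T.Vertex) (w : T.White) : T.White :=
  T.badj (T.wadj w (T.vcol v + 1)) (T.vcol v + 2)

/-- The combinatorial data encode a closed connected oriented surface: the
triangles form a connected complex and the link of every vertex is a single
cycle of triangles. -/
def Surface : Prop :=
  (∀ w w' : T.White, Relation.ReflTransGen T.WAdj w w') ∧
  ∀ (v : T.Vertex) (w w' : T.White), T.wvert w (T.vcol v) = v → T.wvert w' (T.vcol v) = v →
    ∃ k : ℕ, (T.rotAt v)^[k] w = w'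

/-- A planar trinity: a trinity on the sphere (Euler characteristic 2) with a
distinguished outer white triangle. -/
def Planar : Prop :=
  T.Surface ∧ T.outer.isSome ∧ Fintype.card T.Vertex = Fintype.card T.White + 2

/-- A toric trinity: a trinity on the torus (Euler characteristic 0), with all
triangles and vertices taking part in matchings. -/
def Toric : Prop :=
  T.Surface ∧ T.outer = none ∧ Fintype.card T.Vertex = Fintype.card T.White

/-- The configuration of a general clock move: three white triangles `W 0, W 1,
W 2` and three vertices `u 0, u 1, u 2` (one of each color) such that `W c`
contains the vertices `u c'` for both colors `c' ≠ c`; the three edges of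
colors `c` of the triangles `W c` then form a closed triangle of edges through
the vertices `u`, bounding a disk on the side opposite to the whites.
(For the boundary of a black triangle `b` this recovers `W = T.badj b`,
`u = T.bvert b`.) -/
def CombConfig (W : Fin 3 → T.White) (u : Fin 3 → T.Vertex) : Prop :=
  ∀ c c' : Fin 3, c' ≠ c → T.wvert (W c) c' = u c'

/-- A general clockwise move from `s` to `t`: about some clock-move
configuration whose three (non-outer) white triangles are matched with its
three vertices, the matching is switched from the clockwise pattern to the
counter-clockwise one, all other matches being kept. -/
def CWMove (s t : T.State) : Prop :=
  ∃ (W : Fin 3 → T.White) (u : Fin 3 → T.Vertex),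
    T.CombConfig W u ∧ (∀ c, ¬ T.IsOuter (W c)) ∧
    (∀ c, s.toFun (W c) = u (c + 1)) ∧ (∀ c, t.toFun (W c) = u (c + 2)) ∧
    ∀ w, (∀ c, w ≠ W c) → t.toFun w = s.toFun w

/-- `P` exhibits the closed triangle of edges determined by the clock-move
configuration `W` as separating: `P` is a two-coloring of the triangles which
changes value exactly across the three edges of the configuration, the white
triangles `W c` being on the `P`-side. -/
def ConfigCut (W : Fin 3 → T.White) (P : T.White ⊕ T.Black → Prop) : Prop :=
  (∀ (w : T.White) (c : Fin 3), (∀ c₀, ¬ (w = W c₀ ∧ c = c₀)) →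
    (P (Sum.inl w) ↔ P (Sum.inr (T.wadj w c)))) ∧
  (∀ c, P (Sum.inl (W c))) ∧ (∀ c, ¬ P (Sum.inr (T.wadj (W c) c)))

/-- A trinity is irreducible if it is not the trinity `F` with a single black
and a single white triangle, and it is not a nontrivial connected sum; i.e.
every separating closed triangle of edges cuts off a single triangle. -/
def Irreducible : Prop :=
  1 < Fintype.card T.White ∧
  ∀ (W : Fin 3 → T.White) (u : Fin 3 → T.Vertex) (P : T.White ⊕ T.Black → Prop),
    T.CombConfig W u → T.ConfigCut W P →
      (∃ b : T.Black, ∀ x, ¬ P x ↔ x = Sum.inr b) ∨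
      (∃ w : T.White, ∀ x, P x ↔ x = Sum.inl w)

/-! ### The directed dual graphs `G_X^*`

For a color `X`, the vertices of the directed graph `G_X^*` are the vertices of
the trinity of color `X` and its directed edges are in natural bijection with
the white triangles: the white triangle `w` corresponds to the dual edge of its
edge of color `X`, directed from the vertex of color `X` of the adjacent black
triangle `wadj w X` (its tail) to the vertex of color `X` of `w` (its head).
The arrows of a state pointing to vertices of color `X` are edges of `G_X^*`. -/

/-- The head of the edge of `G_X^*` corresponding to the white triangle `w`. -/
def head (X : Fin 3) (w : T.White) : T.Vertex := T.wvert w X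

/-- The tail of the edge of `G_X^*` corresponding to the white triangle `w`. -/
def tail (X : Fin 3) (w : T.White) : T.Vertex := T.bvert (T.wadj w X) X

/-- One-step reachability in `G_X^*` along edges from the set `A`. -/
def ARel (X : Fin 3) (A : Finset T.White) (a b : T.Vertex) : Prop :=
  ∃ w ∈ A, T.tail X w = a ∧ T.head X w = b

/-- `A` is a spanning arborescence of `G_X^*`, rooted at the root of color `X`
(the vertex of color `X` of the outer triangle `o`): a spanning tree all of
whose edges point away from the root. -/
def IsArborescence (X : Fin 3) (o : T.White) (A : Finset T.White) : Prop :=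
  (∀ w ∈ A, T.head X w ≠ T.wvert o X) ∧
  (∀ v : T.Vertex, T.vcol v = X → v ≠ T.wvert o X → ∃! w, w ∈ A ∧ T.head X w = v) ∧
  (∀ v : T.Vertex, T.vcol v = X → Relation.ReflTransGen (T.ARel X A) (T.wvert o X) v)

/-- One step of the tour tracing (counter-clockwise) the boundary of a small
neighborhood of the spanning tree `A` in `G_X^*`.  A position of the tour is a
dart `(w, d)`: the edge `w` of `G_X^*` together with a direction (`true`:
towards the head, `false`: towards the tail).  From the end of the dart one
rotates to the next edge-end around the vertex; if that edge belongs to `A` it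
is traversed away from the vertex, and otherwise its end is crossed (recorded
by bouncing back towards the vertex). -/
def tourStep (X : Fin 3) (A : Finset T.White) : T.White × Bool → T.White × Bool :=
  fun p =>
    if p.2 then
      let w' := T.badj (T.wadj p.1 (X + 1)) X
      (w', decide (w' ∈ A))
    else
      let w' := T.badj (T.wadj p.1 X) (X + 2)
      (w', decide (w' ∉ A))

/-- The position of the edge `w` of `G_X^*` in the ordering `<_A` determined by
the spanning arborescence `A`: the first time the boundary tour of a
neighborhood of `A` (started on the outer white triangle `o`, i.e. at the dart
arriving at the root through `o`) travels along `w` (if `w ∈ A`) or crosses an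
end of `w` (if `w ∉ A`). -/
noncomputable def ordIdx (X : Fin 3) (o : T.White) (A : Finset T.White) (w : T.White) : ℕ :=
  sInf {k : ℕ | ((T.tourStep X A)^[k] (o, true)).1 = w}

/-- `A` is the clocked arborescence of `G_X^*`: the spanning arborescence such
that for every non-root vertex `y` of color `X`, the edge of `A` pointing to
`y` is smallest, with respect to the ordering `<_A`, among all edges of
`G_X^*` terminating at `y`. -/
def IsClocked (X : Fin 3) (o : T.White) (A : Finset T.White) : Prop :=
  T.IsArborescence X o A ∧
    ∀ w ∈ A, ∀ w' : T.White, w' ≠ w → T.head X w' = T.head X w →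
      T.ordIdx X o A w < T.ordIdx X o A w'

/-! ### Wreaths (toric trinities) -/

/-- A nonempty set `C` of edges of `G_R^*` forming a single (directed) cycle:
at every red vertex the in-degree and out-degree in `C` agree and are at most
one, and `C` is connected. -/
def IsDirCycle (C : Finset T.White) : Prop :=
  C.Nonempty ∧
  (∀ v : T.Vertex, T.vcol v = 0 →
    (C.filter fun w => T.head 0 w = v).card = (C.filter fun w => T.tail 0 w = v).card ∧
    (C.filter fun w => T.head 0 w = v).card ≤ 1) ∧
  ∀ w ∈ C, ∀ w' ∈ C,
    Relation.ReflTransGen (fun a b => a ∈ C ∧ b ∈ C ∧ T.head 0 a = T.tail 0 b) w w'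

/-- The cycle `C` of edges of `G_R^*` separates the surface: the faces of
`G_R^*` (which correspond to the green and blue vertices of the trinity) can be
two-colored so that the two faces adjacent along an edge of `G_R^*` (namely the
faces of the green and the blue endpoint of the crossed red edge) get the same
color exactly when the edge does not belong to `C`. -/
def SeparatingSet (C : Finset T.White) : Prop :=
  ∃ P : T.Vertex → Prop,
    (∀ w : T.White, w ∉ C → (P (T.wvert w 1) ↔ P (T.wvert w 2))) ∧
    ∀ w ∈ C, ¬ (P (T.wvert w 1) ↔ P (T.wvert w 2))

/-- A wreath: a set `W` of edges of the directed dual graph `G_R^*` such that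
every red vertex has exactly one edge of `W` pointing to it and the edges of
`W` form no separating cycle. -/
def IsWreath (W : Finset T.White) : Prop :=
  (∀ v : T.Vertex, T.vcol v = 0 → ∃! w, w ∈ W ∧ T.head 0 w = v) ∧
  ∀ C ⊆ W, T.IsDirCycle C → ¬ T.SeparatingSet C

end Trinity

/-! ### Auxiliary development for the proof -/

open Classical

namespace Trinity

variable {T : Trinity}

/-- Faces of the trinity. -/
abbrev FaceT (T : Trinity) := T.White ⊕ T.Black

/-- Edges of the trinity, indexed by (white triangle, color). -/
abbrev EdgeT (T : Trinity) := T.White × Fin 3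

lemma fin3_add_one_ne : ∀ c : Fin 3, c + 1 ≠ c := by decide
lemma fin3_add_two_ne : ∀ c : Fin 3, c + 2 ≠ c := by decide
lemma fin3_a21 : ∀ a : Fin 3, a + 2 + 1 = a := by decide
lemma fin3_a22 : ∀ a : Fin 3, a + 2 + 2 = a + 1 := by decide
lemma fin3_a11 : ∀ a : Fin 3, a + 1 + 1 = a + 2 := by decide
lemma fin3_a12 : ∀ a : Fin 3, a + 1 + 2 = a := by decide

lemma bvert_badj (b : T.Black) (c x : Fin 3) (h : x ≠ c) :
    T.bvert b x = T.wvert (T.badj b c) x := by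
  have h2 := T.bvert_wadj (T.badj b c) c x h
  rw [T.wadj_badj] at h2
  exact h2

/-- Incidence of an edge with a vertex (as a rational coefficient):
the edge of色 `c` of `w` is directed from its vertex of color `c+1`
to its vertex of color `c+2`. -/
noncomputable def inc (e : EdgeT T) (v : T.Vertex) : ℚ :=
  (if T.wvert e.1 (e.2 + 1) = v then 1 else 0) -
    (if T.wvert e.1 (e.2 + 2) = v then 1 else 0)

/-- Pointwise boundary map on 2-chains. -/
noncomputable def d2fun (a : FaceT T → ℚ) : EdgeT T → ℚ :=
  fun e => a (.inl e.1) - a (.inr (T.wadj e.1 e.2))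

/-- The boundary map `∂₂` as a linear map. -/
noncomputable def d2L (T : Trinity) : (FaceT T → ℚ) →ₗ[ℚ] (EdgeT T → ℚ) where
  toFun := d2fun
  map_add' a b := by funext e; simp [d2fun]; ring
  map_smul' q a := by funext e; simp [d2fun]; ring

@[simp] lemma d2L_apply (a : FaceT T → ℚ) : T.d2L a = d2fun a := rfl

/-- The boundary map `∂₁` as a linear map. -/
noncomputable def d1L (T : Trinity) : (EdgeT T → ℚ) →ₗ[ℚ] (T.Vertex → ℚ) where
  toFun g := fun v => ∑ e : EdgeT T, g e * inc e v
  map_add' a b := by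
    funext v
    simp only [Pi.add_apply, ← Finset.sum_add_distrib]
    exact Finset.sum_congr rfl fun e _ => by ring
  map_smul' q a := by
    funext v
    simp only [Pi.smul_apply, smul_eq_mul, RingHom.id_apply, Finset.mul_sum]
    exact Finset.sum_congr rfl fun e _ => by ring

lemma d1L_apply (g : EdgeT T → ℚ) (v : T.Vertex) :
    T.d1L g v = ∑ e : EdgeT T, g e * inc e v := rfl

lemma sum_fin3_shift (g : Fin 3 → ℚ) (a : Fin 3) :
    ∑ c : Fin 3, g (c + a) = ∑ c : Fin 3, g c :=
  Fintype.sum_equiv (Equiv.addRight a) _ _ (fun c => rfl)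

/-- The sum of the incidences of the three edges of a white triangle with any
vertex vanishes. -/
lemma sum_inc_white (w : T.White) (v : T.Vertex) :
    ∑ c : Fin 3, inc ((w, c) : EdgeT T) v = 0 := by
  simp only [inc]
  rw [Finset.sum_sub_distrib]
  have h1 : ∑ c : Fin 3, (if T.wvert w (c + 1) = v then (1:ℚ) else 0)
      = ∑ c : Fin 3, (if T.wvert w c = v then (1:ℚ) else 0) :=
    sum_fin3_shift (fun c => if T.wvert w c = v then (1:ℚ) else 0) 1
  have h2 : ∑ c : Fin 3, (if T.wvert w (c + 2) = v then (1:ℚ) else 0)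
      = ∑ c : Fin 3, (if T.wvert w c = v then (1:ℚ) else 0) :=
    sum_fin3_shift (fun c => if T.wvert w c = v then (1:ℚ) else 0) 2
  rw [h1, h2, sub_self]

/-- The sum of the incidences of the three edges of a black triangle with any
vertex vanishes. -/
lemma sum_inc_black (b : T.Black) (v : T.Vertex) :
    ∑ c : Fin 3, inc ((T.badj b c, c) : EdgeT T) v = 0 := by
  have key : ∀ c : Fin 3, inc ((T.badj b c, c) : EdgeT T) v
      = (if T.bvert b (c + 1) = v then (1:ℚ) else 0) -
        (if T.bvert b (c + 2) = v then 1 else 0) := by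
    intro c
    simp only [inc]
    rw [bvert_badj b c (c+1) (fin3_add_one_ne c), bvert_badj b c (c+2) (fin3_add_two_ne c)]
  rw [Finset.sum_congr rfl (fun c _ => key c), Finset.sum_sub_distrib]
  have h1 : ∑ c : Fin 3, (if T.bvert b (c + 1) = v then (1:ℚ) else 0)
      = ∑ c : Fin 3, (if T.bvert b c = v then (1:ℚ) else 0) :=
    sum_fin3_shift (fun c => if T.bvert b c = v then (1:ℚ) else 0) 1
  have h2 : ∑ c : Fin 3, (if T.bvert b (c + 2) = v then (1:ℚ) else 0)
      = ∑ c : Fin 3, (if T.bvert b c = v then (1:ℚ) else 0) :=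
    sum_fin3_shift (fun c => if T.bvert b c = v then (1:ℚ) else 0) 2
  rw [h1, h2, sub_self]

/-- Edges as pairs (white, color) are in bijection with pairs (black, color). -/
def edgeBlackEquiv (T : Trinity) : EdgeT T ≃ T.Black × Fin 3 where
  toFun e := (T.wadj e.1 e.2, e.2)
  invFun p := (T.badj p.1 p.2, p.2)
  left_inv e := by simp [T.badj_wadj]
  right_inv p := by simp [T.wadj_badj]

/-- `∂₁ ∘ ∂₂ = 0`. -/
lemma d1_d2 (a : FaceT T → ℚ) : T.d1L (T.d2L a) = 0 := by
  funext v
  simp only [d2L_apply, d1L_apply, d2fun, Pi.zero_apply]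
  have hsplit : ∀ e : EdgeT T,
      (a (.inl e.1) - a (.inr (T.wadj e.1 e.2))) * inc e v
        = a (.inl e.1) * inc e v - a (.inr (T.wadj e.1 e.2)) * inc e v := by
    intro e; ring
  rw [Finset.sum_congr rfl (fun e _ => hsplit e), Finset.sum_sub_distrib]
  have hW : ∑ e : EdgeT T, a (.inl e.1) * inc e v = 0 := by
    rw [Fintype.sum_prod_type]
    have : ∀ w : T.White, ∑ c : Fin 3, a (.inl w) * inc ((w, c) : EdgeT T) v = 0 := by
      intro w
      rw [← Finset.mul_sum, sum_inc_white, mul_zero]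
    rw [Finset.sum_congr rfl (fun w _ => this w), Finset.sum_const, smul_zero]
  have hB : ∑ e : EdgeT T, a (.inr (T.wadj e.1 e.2)) * inc e v = 0 := by
    rw [← Equiv.sum_comp (T.edgeBlackEquiv).symm
      (fun e => a (.inr (T.wadj e.1 e.2)) * inc e v)]
    have hterm : ∀ p : T.Black × Fin 3,
        a (.inr (T.wadj (T.badj p.1 p.2) p.2)) * inc ((T.badj p.1 p.2, p.2) : EdgeT T) v
          = a (.inr p.1) * inc ((T.badj p.1 p.2, p.2) : EdgeT T) v := by
      intro p; rw [T.wadj_badj]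
    calc ∑ p : T.Black × Fin 3,
          a (.inr (T.wadj ((T.edgeBlackEquiv).symm p).1 ((T.edgeBlackEquiv).symm p).2)) *
            inc ((T.edgeBlackEquiv).symm p) v
        = ∑ p : T.Black × Fin 3, a (.inr p.1) * inc ((T.badj p.1 p.2, p.2) : EdgeT T) v := by
          exact Finset.sum_congr rfl (fun p _ => hterm p)
      _ = 0 := by
          rw [Fintype.sum_prod_type]
          have : ∀ b : T.Black,
              ∑ c : Fin 3, a (.inr b) * inc ((T.badj b c, c) : EdgeT T) v = 0 := by
            intro b
            rw [← Finset.mul_sum, sum_inc_black, mul_zero]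
          rw [Finset.sum_congr rfl (fun b _ => this b), Finset.sum_const, smul_zero]
  rw [hW, hB, sub_self]

end Trinity

namespace Trinity

variable {T : Trinity}

/-- Two vertices are connected in the 1-skeleton iff the difference of their
characteristic functions is a boundary. -/
noncomputable def VertConn (T : Trinity) (x y : T.Vertex) : Prop :=
  (Pi.single x 1 - Pi.single y 1 : T.Vertex → ℚ) ∈ LinearMap.range T.d1L

lemma vertConn_refl (x : T.Vertex) : T.VertConn x x := by
  rw [VertConn, sub_self]; exact Submodule.zero_mem _

lemma vertConn_symm {x y : T.Vertex} (h : T.VertConn x y) : T.VertConn y x := by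
  rw [VertConn] at h ⊢
  have := Submodule.neg_mem _ h
  rw [neg_sub] at this
  exact this

lemma vertConn_trans {x y z : T.Vertex} (h : T.VertConn x y) (h' : T.VertConn y z) :
    T.VertConn x z := by
  rw [VertConn] at h h' ⊢
  have := Submodule.add_mem _ h h'
  rw [sub_add_sub_cancel] at this
  exact this

lemma d1L_single (e : EdgeT T) : T.d1L (Pi.single e 1) = fun v => inc e v := by
  funext v
  rw [d1L_apply]
  rw [Finset.sum_eq_single e]
  · simp
  · intro e' _ hne
    rw [Pi.single_eq_of_ne hne, zero_mul]
  · intro h; exact absurd (Finset.mem_univ e) h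

/-- The two endpoints of an edge are connected. -/
lemma vertConn_edge (w : T.White) (c : Fin 3) :
    T.VertConn (T.wvert w (c + 1)) (T.wvert w (c + 2)) := by
  refine ⟨Pi.single ((w, c) : EdgeT T) 1, ?_⟩
  rw [d1L_single]
  funext v
  have hne : T.wvert w (c + 1) ≠ T.wvert w (c + 2) := by
    intro h
    have h1 := T.wvert_col w (c + 1)
    have h2 := T.wvert_col w (c + 2)
    rw [h] at h1
    rw [h1] at h2
    exact (by decide : ∀ c : Fin 3, ¬ (c + 2 = c + 1)) c h2.symm
  by_cases h1 : T.wvert w (c + 1) = v <;> by_cases h2 : T.wvert w (c + 2) = v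
  · exact absurd (h1.trans h2.symm) hne
  · simp [inc, Pi.single_apply, h1, h2, eq_comm]
  · simp [inc, Pi.single_apply, h1, h2, eq_comm]
  · simp [inc, Pi.single_apply, h1, h2, eq_comm]

/-- Any two vertices of a white triangle are connected. -/
lemma vertConn_white (w : T.White) (a b : Fin 3) :
    T.VertConn (T.wvert w a) (T.wvert w b) := by
  have key : ∀ a : Fin 3, T.VertConn (T.wvert w a) (T.wvert w (a + 1)) := by
    intro a
    have := T.vertConn_edge w (a + 2)
    rwa [fin3_a21, fin3_a22] at this
  rcases (by decide : ∀ a b : Fin 3, b = a ∨ b = a + 1 ∨ b = a + 1 + 1) a b with h | h | h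
  · rw [h]; exact T.vertConn_refl _
  · rw [h]; exact key a
  · rw [h]; exact vertConn_trans (key a) (key (a + 1))

/-- Any two vertices of a black triangle are connected. -/
lemma vertConn_black (b : T.Black) (x y : Fin 3) :
    T.VertConn (T.bvert b x) (T.bvert b y) := by
  by_cases hxy : x = y
  · rw [hxy]; exact T.vertConn_refl _
  · obtain ⟨c, hx, hy⟩ := (by decide : ∀ x y : Fin 3, x ≠ y → ∃ c, x ≠ c ∧ y ≠ c) x y hxy
    rw [bvert_badj b c x hx, bvert_badj b c y hy]
    exact T.vertConn_white _ x y

/-- Vertices of adjacent white triangles are connected. -/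
lemma vertConn_wadj {w w' : T.White} (h : T.WAdj w w') (a a' : Fin 3) :
    T.VertConn (T.wvert w a) (T.wvert w' a') := by
  obtain ⟨c, c', hb⟩ := h
  have h1 : T.VertConn (T.wvert w a) (T.bvert (T.wadj w c) (c + 1)) := by
    rw [T.bvert_wadj w c (c + 1) (fin3_add_one_ne c)]
    exact T.vertConn_white w a (c + 1)
  have h2 : T.VertConn (T.bvert (T.wadj w' c') (c' + 1)) (T.wvert w' a') := by
    rw [T.bvert_wadj w' c' (c' + 1) (fin3_add_one_ne c')]
    exact T.vertConn_white w' (c' + 1) a'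
  refine vertConn_trans (vertConn_trans h1 ?_) h2
  rw [hb]
  exact T.vertConn_black _ _ _

/-- Every vertex is a vertex of some white triangle (using a state). -/
lemma vertex_on_white (s : T.State) (v : T.Vertex) : ∃ w a, T.wvert w a = v := by
  by_cases hr : T.IsRoot v
  · obtain ⟨w, _, c, hv⟩ := hr
    exact ⟨w, c, hv.symm⟩
  · obtain ⟨w, _, hw⟩ := s.surj v hr
    obtain ⟨c, hc⟩ := s.incident w
    exact ⟨w, c, by rw [← hc, hw]⟩

/-- In a connected trinity, any two vertices are connected. -/
lemma vertConn_all (hsurf : T.Surface) (s : T.State) (x y : T.Vertex) : T.VertConn x y := by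
  obtain ⟨w, a, hx⟩ := vertex_on_white s x
  obtain ⟨w', a', hy⟩ := vertex_on_white s y
  rw [← hx, ← hy]
  have key : ∀ w w' : T.White, Relation.ReflTransGen T.WAdj w w' →
      ∀ a a', T.VertConn (T.wvert w a) (T.wvert w' a') := by
    intro w w' h
    induction h with
    | refl => intro a a'; exact T.vertConn_white _ a a'
    | tail _ hadj ih =>
        intro a a'
        exact vertConn_trans (ih a 0) (T.vertConn_wadj hadj 0 a')
  exact key w w' (hsurf.1 w w') a a'

/-- A 2-cycle is constant (face connectivity). -/
lemma kerd2_const (hsurf : T.Surface) (a : FaceT T → ℚ) (ha : ∀ e : EdgeT T, d2fun a e = 0)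
    (f g : FaceT T) : a f = a g := by
  have hwb : ∀ (w : T.White) (c : Fin 3), a (.inl w) = a (.inr (T.wadj w c)) := by
    intro w c
    have := ha (w, c)
    simp only [d2fun] at this
    linarith
  have hww : ∀ w w' : T.White, a (.inl w) = a (.inl w') := by
    intro w w'
    have key : ∀ w w' : T.White, Relation.ReflTransGen T.WAdj w w' →
        a (.inl w) = a (.inl w') := by
      intro w w' h
      induction h with
      | refl => rfl
      | tail _ hadj ih =>
          obtain ⟨c, c', hb⟩ := hadj
          rw [ih, hwb _ c, hb, ← hwb _ c']
    exact key w w' (hsurf.1 w w')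
  have hred : ∀ f : FaceT T, ∃ w : T.White, a f = a (.inl w) := by
    intro f
    match f with
    | .inl w => exact ⟨w, rfl⟩
    | .inr b =>
        refine ⟨T.badj b 0, ?_⟩
        have := hwb (T.badj b 0) 0
        rw [T.wadj_badj] at this
        exact this.symm
  obtain ⟨wf, hf⟩ := hred f
  obtain ⟨wg, hg⟩ := hred g
  rw [hf, hg]
  exact hww wf wg

end Trinity

namespace Trinity

variable {T : Trinity}

/-- The augmentation (sum of coefficients) on 0-chains. -/
noncomputable def sumL (T : Trinity) : (T.Vertex → ℚ) →ₗ[ℚ] ℚ where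
  toFun g := ∑ v, g v
  map_add' a b := by simp [Finset.sum_add_distrib]
  map_smul' q a := by simp [Finset.mul_sum]

lemma sumzero_le_range_d1 (hsurf : T.Surface) (s : T.State) (v₀ : T.Vertex) :
    LinearMap.ker T.sumL ≤ LinearMap.range T.d1L := by
  intro g hg
  have hg0 : ∑ v, g v = 0 := hg
  have expand : g = ∑ v, g v • ((Pi.single v 1 : T.Vertex → ℚ) - Pi.single v₀ 1) := by
    funext x
    rw [Finset.sum_apply]
    have hterm : ∀ v : T.Vertex,
        ((g v • ((Pi.single v 1 : T.Vertex → ℚ) - Pi.single v₀ 1) : T.Vertex → ℚ)) x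
          = (if x = v then g v else 0) - g v * (if x = v₀ then 1 else 0) := by
      intro v
      simp only [Pi.smul_apply, Pi.sub_apply, smul_eq_mul, Pi.single_apply]
      split_ifs <;> ring
    rw [Finset.sum_congr rfl (fun v _ => hterm v), Finset.sum_sub_distrib]
    rw [Finset.sum_ite_eq Finset.univ x g]
    rw [← Finset.sum_mul, hg0]
    simp
  rw [expand]
  refine Submodule.sum_mem _ (fun v _ => Submodule.smul_mem _ _ ?_)
  exact vertConn_all hsurf s v v₀

lemma exists_D (hpl : T.Planar) (s : T.State) (W : Fin 3 → T.White) (u : Fin 3 → T.Vertex)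
    (hconf : T.CombConfig W u) (o : T.White) (ho : T.IsOuter o) :
    ∃ D : FaceT T → ℚ,
      (∀ e : EdgeT T, d2fun D e = (if e.1 = W e.2 then 1 else 0)) ∧ D (.inl o) = 0 := by
  classical
  set lp : EdgeT T → ℚ := fun e => if e.1 = W e.2 then 1 else 0 with hlpdef
  -- the loop is a 1-cycle
  have hlp : T.d1L lp = 0 := by
    funext v
    rw [d1L_apply, Fintype.sum_prod_type, Finset.sum_comm, Pi.zero_apply]
    have hinner : ∀ c : Fin 3,
        ∑ w : T.White, lp (w, c) * inc ((w, c) : EdgeT T) v = inc ((W c, c) : EdgeT T) v := by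
      intro c
      rw [Finset.sum_eq_single (W c)]
      · simp [hlpdef]
      · intro w _ hne
        simp [hlpdef, hne]
      · intro h; exact absurd (Finset.mem_univ _) h
    rw [Finset.sum_congr rfl (fun c _ => hinner c)]
    have hterm : ∀ c : Fin 3, inc ((W c, c) : EdgeT T) v
        = (if u (c + 1) = v then (1:ℚ) else 0) - (if u (c + 2) = v then 1 else 0) := by
      intro c
      simp only [inc]
      rw [hconf c (c + 1) (fin3_add_one_ne c), hconf c (c + 2) (fin3_add_two_ne c)]
    rw [Finset.sum_congr rfl (fun c _ => hterm c), Finset.sum_sub_distrib]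
    have h1 := sum_fin3_shift (fun c => if u c = v then (1:ℚ) else 0) 1
    have h2 := sum_fin3_shift (fun c => if u c = v then (1:ℚ) else 0) 2
    rw [h1, h2, sub_self]
  have hmem_ker : lp ∈ LinearMap.ker T.d1L := hlp
  -- dimensions
  set n := Fintype.card T.White with hn
  have cB : Fintype.card T.Black = n :=
    Fintype.card_congr ⟨fun b => T.badj b 0, fun w => T.wadj w 0,
      fun b => T.wadj_badj b 0, fun w => T.badj_wadj w 0⟩
  have cV : Fintype.card T.Vertex = n + 2 := hpl.2.2
  have cF : Fintype.card (FaceT T) = n + n := by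
    rw [Fintype.card_sum, cB]
  have cE : Fintype.card (EdgeT T) = 3 * n := by
    rw [Fintype.card_prod, Fintype.card_fin]; ring
  have hle : LinearMap.range T.d2L ≤ LinearMap.ker T.d1L := by
    rintro x ⟨a, rfl⟩
    exact d1_d2 a
  have h1 : Module.finrank ℚ (LinearMap.range T.d2L)
      + Module.finrank ℚ (LinearMap.ker T.d2L) = n + n := by
    rw [LinearMap.finrank_range_add_finrank_ker, Module.finrank_fintype_fun_eq_card, cF]
  have hker2 : Module.finrank ℚ (LinearMap.ker T.d2L) ≤ 1 := by
    have hinj : Function.Injective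
        ((LinearMap.proj (Sum.inl o : FaceT T)).comp (LinearMap.ker T.d2L).subtype) := by
      intro a b hab
      have hd : ∀ x : ↥(LinearMap.ker T.d2L), T.d2L x.1 = 0 := fun x => x.2
      have hconst : ∀ (x : ↥(LinearMap.ker T.d2L)) (f : FaceT T), x.1 f = x.1 (.inl o) := by
        intro x f
        exact kerd2_const hpl.1 x.1 (fun e => congrFun (hd x) e) f (.inl o)
      apply Subtype.ext
      funext f
      rw [hconst a f, hconst b f]
      exact hab
    calc Module.finrank ℚ (LinearMap.ker T.d2L)
        ≤ Module.finrank ℚ ℚ := LinearMap.finrank_le_finrank_of_injective hinj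
      _ = 1 := Module.finrank_self ℚ
  have h2 : Module.finrank ℚ (LinearMap.range T.d1L)
      + Module.finrank ℚ (LinearMap.ker T.d1L) = 3 * n := by
    rw [LinearMap.finrank_range_add_finrank_ker, Module.finrank_fintype_fun_eq_card, cE]
  have hrange1 : n + 1 ≤ Module.finrank ℚ (LinearMap.range T.d1L) := by
    have hmono := Submodule.finrank_mono (sumzero_le_range_d1 hpl.1 s (T.wvert o 0))
    have hsum : Module.finrank ℚ (LinearMap.range T.sumL)
        + Module.finrank ℚ (LinearMap.ker T.sumL) = n + 2 := by
      rw [LinearMap.finrank_range_add_finrank_ker, Module.finrank_fintype_fun_eq_card, cV]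
    have hsurj : Function.Surjective T.sumL := by
      intro q
      refine ⟨Pi.single (T.wvert o 0) q, ?_⟩
      show ∑ v, Pi.single (T.wvert o 0) q v = q
      rw [Finset.sum_pi_single']
      simp
    have hrs : Module.finrank ℚ (LinearMap.range T.sumL) = 1 := by
      rw [LinearMap.range_eq_top.mpr hsurj, finrank_top, Module.finrank_self]
    omega
  have hdim : Module.finrank ℚ (LinearMap.ker T.d1L)
      ≤ Module.finrank ℚ (LinearMap.range T.d2L) := by omega
  have heq := Submodule.eq_of_le_of_finrank_le hle hdim
  rw [← heq] at hmem_ker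
  obtain ⟨D0, hD0⟩ := hmem_ker
  refine ⟨D0 - (fun _ => D0 (.inl o)), ?_, by simp⟩
  intro e
  have : d2fun D0 e = lp e := congrFun hD0 e
  simp only [d2fun] at this ⊢
  simpa using this

end Trinity

section AbstractChi

variable {F E V : Type} [Fintype F] [Fintype E] [Fintype V]
variable [DecidableEq F] [DecidableEq E] [DecidableEq V]

/-- Abstract boundary map on 2-chains of a combinatorial closed complex where
each edge `e` has white-side face `fW e` and black-side face `fB e`. -/
noncomputable def d2A (fW fB : E → F) : (F → ℚ) →ₗ[ℚ] (E → ℚ) where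
  toFun a := fun e => a (fW e) - a (fB e)
  map_add' a b := by funext e; simp; ring
  map_smul' q a := by funext e; simp; ring

/-- Abstract boundary map on 1-chains, where edge `e` runs from `p2 e` to `p1 e`. -/
noncomputable def d1A (p1 p2 : E → V) : (E → ℚ) →ₗ[ℚ] (V → ℚ) where
  toFun g := fun v => ∑ e : E, g e * ((if p1 e = v then 1 else 0) - (if p2 e = v then 1 else 0))
  map_add' a b := by
    funext v
    simp only [Pi.add_apply, ← Finset.sum_add_distrib]
    exact Finset.sum_congr rfl fun e _ => by ring
  map_smul' q a := by
    funext v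
    simp only [Pi.smul_apply, smul_eq_mul, RingHom.id_apply, Finset.mul_sum]
    exact Finset.sum_congr rfl fun e _ => by ring

/-- Abstract augmentation map. -/
noncomputable def sumLV (V : Type) [Fintype V] : (V → ℚ) →ₗ[ℚ] ℚ where
  toFun g := ∑ v, g v
  map_add' a b := by simp [Finset.sum_add_distrib]
  map_smul' q a := by simp [Finset.mul_sum]

lemma sumzero_le_abstract [Nonempty V] (R : Submodule ℚ (V → ℚ))
    (h : ∀ x y : V, (Pi.single x 1 - Pi.single y 1 : V → ℚ) ∈ R) :
    LinearMap.ker (sumLV V) ≤ R := by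
  intro g hg
  have hg0 : ∑ v, g v = 0 := hg
  obtain ⟨v₀⟩ := ‹Nonempty V›
  have expand : g = ∑ v, g v • ((Pi.single v 1 : V → ℚ) - Pi.single v₀ 1) := by
    funext x
    rw [Finset.sum_apply]
    have hterm : ∀ v : V,
        ((g v • ((Pi.single v 1 : V → ℚ) - Pi.single v₀ 1) : V → ℚ)) x
          = (if x = v then g v else 0) - g v * (if x = v₀ then 1 else 0) := by
      intro v
      simp only [Pi.smul_apply, Pi.sub_apply, smul_eq_mul, Pi.single_apply]
      split_ifs <;> ring
    rw [Finset.sum_congr rfl (fun v _ => hterm v), Finset.sum_sub_distrib]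
    rw [Finset.sum_ite_eq Finset.univ x g]
    rw [← Finset.sum_mul, hg0]
    simp
  rw [expand]
  exact Submodule.sum_mem _ (fun v _ => Submodule.smul_mem _ _ (h v v₀))

/-- Euler-characteristic bound for a connected closed combinatorial complex:
`V - E + F ≤ 2`. -/
lemma abstract_chi [Nonempty V] [Nonempty F] (fW fB : E → F) (p1 p2 : E → V)
    (hdd : ∀ a : F → ℚ, d1A p1 p2 (d2A fW fB a) = 0)
    (hfc : ∀ a : F → ℚ, (∀ e, a (fW e) = a (fB e)) → ∀ f f', a f = a f')
    (hvc : ∀ x y : V, (Pi.single x 1 - Pi.single y 1 : V → ℚ) ∈ LinearMap.range (d1A p1 p2)) :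
    Fintype.card V + Fintype.card F ≤ Fintype.card E + 2 := by
  classical
  have hA : Module.finrank ℚ (LinearMap.range (d2A fW fB))
      + Module.finrank ℚ (LinearMap.ker (d2A fW fB)) = Fintype.card F := by
    rw [LinearMap.finrank_range_add_finrank_ker, Module.finrank_fintype_fun_eq_card]
  have hB : Module.finrank ℚ (LinearMap.ker (d2A fW fB)) ≤ 1 := by
    obtain ⟨f₀⟩ := ‹Nonempty F›
    have hinj : Function.Injective
        ((LinearMap.proj f₀).comp (LinearMap.ker (d2A fW fB)).subtype) := by
      intro a b hab
      have ha : ∀ e, a.1 (fW e) = a.1 (fB e) := by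
        intro e
        have := congrFun (a.2 : d2A fW fB a.1 = 0) e
        simp only [d2A, LinearMap.coe_mk, AddHom.coe_mk, Pi.zero_apply] at this
        linarith
      have hb : ∀ e, b.1 (fW e) = b.1 (fB e) := by
        intro e
        have := congrFun (b.2 : d2A fW fB b.1 = 0) e
        simp only [d2A, LinearMap.coe_mk, AddHom.coe_mk, Pi.zero_apply] at this
        linarith
      apply Subtype.ext
      funext f
      rw [hfc a.1 ha f f₀, hfc b.1 hb f f₀]
      exact hab
    calc Module.finrank ℚ (LinearMap.ker (d2A fW fB))
        ≤ Module.finrank ℚ ℚ := LinearMap.finrank_le_finrank_of_injective hinj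
      _ = 1 := Module.finrank_self ℚ
  have hle : LinearMap.range (d2A fW fB) ≤ LinearMap.ker (d1A p1 p2) := by
    rintro x ⟨a, rfl⟩
    exact hdd a
  have hC : Module.finrank ℚ (LinearMap.range (d2A fW fB))
      ≤ Module.finrank ℚ (LinearMap.ker (d1A p1 p2)) := Submodule.finrank_mono hle
  have hD : Module.finrank ℚ (LinearMap.range (d1A p1 p2))
      + Module.finrank ℚ (LinearMap.ker (d1A p1 p2)) = Fintype.card E := by
    rw [LinearMap.finrank_range_add_finrank_ker, Module.finrank_fintype_fun_eq_card]
  have hE : Fintype.card V ≤ Module.finrank ℚ (LinearMap.range (d1A p1 p2)) + 1 := by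
    have hmono := Submodule.finrank_mono (sumzero_le_abstract
      (LinearMap.range (d1A p1 p2)) hvc)
    have hsum : Module.finrank ℚ (LinearMap.range (sumLV V))
        + Module.finrank ℚ (LinearMap.ker (sumLV V)) = Fintype.card V := by
      rw [LinearMap.finrank_range_add_finrank_ker, Module.finrank_fintype_fun_eq_card]
    obtain ⟨v₀⟩ := ‹Nonempty V›
    have hsurj : Function.Surjective (sumLV V) := by
      intro q
      refine ⟨Pi.single v₀ q, ?_⟩
      show ∑ v, Pi.single v₀ q v = q
      rw [Finset.sum_pi_single']
      simp
    have hrs : Module.finrank ℚ (LinearMap.range (sumLV V)) = 1 := by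
      rw [LinearMap.range_eq_top.mpr hsurj, finrank_top, Module.finrank_self]
    omega
  omega

end AbstractChi

namespace Trinity

variable {T : Trinity}

/-- `v` is a vertex of the face `f`. -/
def faceVert : FaceT T → T.Vertex → Prop :=
  fun f v => match f with
  | .inl w => ∃ c, T.wvert w c = v
  | .inr b => ∃ c, T.bvert b c = v

section Region

variable (T)
variable (D : FaceT T → ℚ) (M : ℚ)

/-- Edges of the sub-complex cut out by the level `M`. -/
abbrev Esb := {e : EdgeT T // D (.inr (T.wadj e.1 e.2)) < M}

/-- Faces of the capped sub-complex: the faces of value `< M` plus the cap. -/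
abbrev Fsb := Option {f : FaceT T // D f < M}

/-- Vertices of the sub-complex. -/
def VP (v : T.Vertex) : Prop := ∃ f : FaceT T, D f < M ∧ faceVert f v

/-- Vertex type of the sub-complex. -/
abbrev Vsb := {v : T.Vertex // T.VP D M v}

/-- White-side face of an edge (the cap if the white side is not in the region). -/
noncomputable def fWds (e : EdgeT T) : T.Fsb D M :=
  if h : D (.inl e.1) < M then some ⟨.inl e.1, h⟩ else none

/-- White-side face map of the capped sub-complex. -/
noncomputable def fWs (e : T.Esb D M) : T.Fsb D M := T.fWds D M e.1

/-- Black-side face map of the capped sub-complex. -/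
noncomputable def fBs (e : T.Esb D M) : T.Fsb D M := some ⟨.inr (T.wadj e.1.1 e.1.2), e.2⟩

lemma p1s_mem (e : T.Esb D M) : T.VP D M (T.wvert e.1.1 (e.1.2 + 1)) :=
  ⟨.inr (T.wadj e.1.1 e.1.2), e.2,
    ⟨e.1.2 + 1, T.bvert_wadj e.1.1 e.1.2 (e.1.2 + 1) (fin3_add_one_ne e.1.2)⟩⟩

lemma p2s_mem (e : T.Esb D M) : T.VP D M (T.wvert e.1.1 (e.1.2 + 2)) :=
  ⟨.inr (T.wadj e.1.1 e.1.2), e.2,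
    ⟨e.1.2 + 2, T.bvert_wadj e.1.1 e.1.2 (e.1.2 + 2) (fin3_add_two_ne e.1.2)⟩⟩

/-- First endpoint of an edge of the sub-complex. -/
noncomputable def p1s (e : T.Esb D M) : T.Vsb D M :=
  ⟨T.wvert e.1.1 (e.1.2 + 1), T.p1s_mem D M e⟩

/-- Second endpoint of an edge of the sub-complex. -/
noncomputable def p2s (e : T.Esb D M) : T.Vsb D M :=
  ⟨T.wvert e.1.1 (e.1.2 + 2), T.p2s_mem D M e⟩


/-- Reindexing of the edges of the sub-complex by (black face in region, color). -/
def eqvEB : ({b : T.Black // D (.inr b) < M} × Fin 3) ≃ T.Esb D M where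
  toFun z := ⟨(T.badj z.1.1 z.2, z.2), by rw [T.wadj_badj]; exact z.1.2⟩
  invFun e := (⟨T.wadj e.1.1 e.1.2, e.2⟩, e.1.2)
  left_inv z := by
    refine Prod.ext (Subtype.ext ?_) rfl
    exact T.wadj_badj z.1.1 z.2
  right_inv e := Subtype.ext (Prod.ext (T.badj_wadj e.1.1 e.1.2) rfl)

@[simp] lemma eqvEB_val (z : {b : T.Black // D (.inr b) < M} × Fin 3) :
    (T.eqvEB D M z).1 = ((T.badj z.1.1 z.2, z.2) : EdgeT T) := rfl

end Region

end Trinity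

/-- Subtype of a product over a predicate on the first factor. -/
def subProdEquiv {α β : Type} (Q : α → Prop) : {p : α × β // Q p.1} ≃ {a // Q a} × β where
  toFun x := (⟨x.1.1, x.2⟩, x.1.2)
  invFun y := ⟨(y.1.1, y.2), y.1.2⟩
  left_inv x := rfl
  right_inv y := rfl

namespace Trinity

variable {T : Trinity}

section Region2

variable {W : Fin 3 → T.White} {u : Fin 3 → T.Vertex}
variable {D : FaceT T → ℚ} {M : ℚ}

lemma hDmono (hD : ∀ e : EdgeT T, d2fun D e = (if e.1 = W e.2 then 1 else 0))
    (w : T.White) (c : Fin 3) : D (.inr (T.wadj w c)) ≤ D (.inl w) := by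
  have := hD (w, c)
  simp only [d2fun] at this
  split_ifs at this <;> linarith

lemma hcross_eq (hD : ∀ e : EdgeT T, d2fun D e = (if e.1 = W e.2 then 1 else 0))
    (w : T.White) (c : Fin 3) (h : w ≠ W c) :
    D (.inl w) = D (.inr (T.wadj w c)) := by
  have := hD (w, c)
  simp only [d2fun, if_neg h] at this
  linarith

lemma hcross_W (hD : ∀ e : EdgeT T, d2fun D e = (if e.1 = W e.2 then 1 else 0))
    (c : Fin 3) : D (.inl (W c)) = D (.inr (T.wadj (W c) c)) + 1 := by
  have := hD (W c, c)
  rw [if_pos rfl] at this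
  simp only [d2fun] at this
  linarith

lemma sum_inc_config (hconf : T.CombConfig W u) (v : T.Vertex) :
    ∑ c : Fin 3, inc ((W c, c) : EdgeT T) v = 0 := by
  have hterm : ∀ c : Fin 3, inc ((W c, c) : EdgeT T) v
      = (if u (c + 1) = v then (1:ℚ) else 0) - (if u (c + 2) = v then 1 else 0) := by
    intro c
    simp only [inc]
    rw [hconf c (c + 1) (fin3_add_one_ne c), hconf c (c + 2) (fin3_add_two_ne c)]
  rw [Finset.sum_congr rfl (fun c _ => hterm c), Finset.sum_sub_distrib]
  rw [sum_fin3_shift (fun c => if u c = v then (1:ℚ) else 0) 1,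
    sum_fin3_shift (fun c => if u c = v then (1:ℚ) else 0) 2, sub_self]

lemma hdd_inst (hconf : T.CombConfig W u)
    (hD : ∀ e : EdgeT T, d2fun D e = (if e.1 = W e.2 then 1 else 0))
    (hMmax : ∀ f, D f ≤ M) (hWM : ∀ c, D (.inl (W c)) = M) :
    ∀ a : T.Fsb D M → ℚ,
      d1A (T.p1s D M) (T.p2s D M) (d2A (T.fWs D M) (T.fBs D M) a) = 0 := by
  classical
  intro a
  funext v
  simp only [d1A, d2A, LinearMap.coe_mk, AddHom.coe_mk, Pi.zero_apply]
  have hincid : ∀ e : T.Esb D M,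
      ((if T.p1s D M e = v then (1:ℚ) else 0) - (if T.p2s D M e = v then 1 else 0))
        = inc e.1 v.1 := by
    intro e
    simp only [inc]
    congr 1
    · refine if_congr ?_ rfl rfl
      exact ⟨fun h => by rw [← h]; rfl, fun h => Subtype.ext h⟩
    · refine if_congr ?_ rfl rfl
      exact ⟨fun h => by rw [← h]; rfl, fun h => Subtype.ext h⟩
  have hsplit : ∀ e : T.Esb D M,
      (a (T.fWs D M e) - a (T.fBs D M e)) *
        ((if T.p1s D M e = v then (1:ℚ) else 0) - (if T.p2s D M e = v then 1 else 0))
      = a (T.fWs D M e) * inc e.1 v.1 - a (T.fBs D M e) * inc e.1 v.1 := by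
    intro e
    rw [hincid e]
    ring
  rw [Finset.sum_congr rfl (fun e _ => hsplit e), Finset.sum_sub_distrib]
  have hblack : ∑ e : T.Esb D M, a (T.fBs D M e) * inc e.1 v.1 = 0 := by
    rw [← Equiv.sum_comp (T.eqvEB D M) (fun e => a (T.fBs D M e) * inc e.1 v.1)]
    rw [Fintype.sum_prod_type]
    have hinner : ∀ b : {b : T.Black // D (.inr b) < M},
        ∑ c : Fin 3, a (T.fBs D M (T.eqvEB D M (b, c))) * inc (T.eqvEB D M (b, c)).1 v.1
          = 0 := by
      intro b
      have hfb : ∀ c : Fin 3, T.fBs D M (T.eqvEB D M (b, c)) = some ⟨.inr b.1, b.2⟩ := by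
        intro c
        refine congrArg some (Subtype.ext ?_)
        show Sum.inr (T.wadj (T.badj b.1 c) c) = Sum.inr b.1
        rw [T.wadj_badj]
      calc ∑ c : Fin 3, a (T.fBs D M (T.eqvEB D M (b, c))) * inc (T.eqvEB D M (b, c)).1 v.1
          = ∑ c : Fin 3, a (some ⟨.inr b.1, b.2⟩) * inc ((T.badj b.1 c, c) : EdgeT T) v.1 := by
            refine Finset.sum_congr rfl (fun c _ => ?_)
            rw [hfb c, T.eqvEB_val D M]
        _ = a (some ⟨.inr b.1, b.2⟩) * ∑ c : Fin 3, inc ((T.badj b.1 c, c) : EdgeT T) v.1 := by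
            rw [Finset.mul_sum]
        _ = 0 := by rw [sum_inc_black, mul_zero]
    rw [Finset.sum_congr rfl (fun b _ => hinner b), Finset.sum_const, smul_zero]
  have hwhite : ∑ e : T.Esb D M, a (T.fWs D M e) * inc e.1 v.1 = 0 := by
    have h0 : ∀ e : T.Esb D M, a (T.fWs D M e) * inc e.1 v.1
        = (fun e' : EdgeT T => a (T.fWds D M e') * inc e' v.1) e.1 := fun e => rfl
    have h1 : ∑ e : T.Esb D M, a (T.fWs D M e) * inc e.1 v.1
        = ∑ e ∈ Finset.univ.filter (fun e : EdgeT T => D (.inr (T.wadj e.1 e.2)) < M),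
            a (T.fWds D M e) * inc e v.1 := by
      rw [Finset.sum_congr rfl (fun e _ => h0 e)]
      exact (Finset.sum_subtype
        (Finset.univ.filter (fun e : EdgeT T => D (.inr (T.wadj e.1 e.2)) < M))
        (fun x => by simp) (fun e' => a (T.fWds D M e') * inc e' v.1)).symm
    rw [h1, Finset.sum_filter, Fintype.sum_prod_type]
    have hinner : ∀ w : T.White,
        (∑ c : Fin 3, if D (.inr (T.wadj w c)) < M
            then a (T.fWds D M (w, c)) * inc ((w, c) : EdgeT T) v.1 else 0)
        = ∑ c : Fin 3, (if w = W c then a none * inc ((w, c) : EdgeT T) v.1 else 0) := by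
      intro w
      by_cases hw : D (.inl w) < M
      · have hall : ∀ c : Fin 3, D (.inr (T.wadj w c)) < M :=
          fun c => lt_of_le_of_lt (hDmono hD w c) hw
        have hWne : ∀ c : Fin 3, w ≠ W c := by
          intro c hc
          rw [hc, hWM c] at hw
          exact lt_irrefl _ hw
        calc (∑ c : Fin 3, if D (.inr (T.wadj w c)) < M
                then a (T.fWds D M (w, c)) * inc ((w, c) : EdgeT T) v.1 else 0)
            = ∑ c : Fin 3, a (some ⟨.inl w, hw⟩) * inc ((w, c) : EdgeT T) v.1 := by
              refine Finset.sum_congr rfl (fun c _ => ?_)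
              rw [if_pos (hall c)]
              congr 1
              show a (T.fWds D M (w, c)) = _
              rw [fWds, dif_pos hw]
          _ = a (some ⟨.inl w, hw⟩) * ∑ c : Fin 3, inc ((w, c) : EdgeT T) v.1 := by
              rw [Finset.mul_sum]
          _ = 0 := by rw [sum_inc_white, mul_zero]
          _ = ∑ c : Fin 3, (if w = W c then a none * inc ((w, c) : EdgeT T) v.1 else 0) := by
              rw [Finset.sum_congr rfl (fun c _ => by rw [if_neg (hWne c)]),
                Finset.sum_const, smul_zero]
      · have hwM : D (.inl w) = M := le_antisymm (hMmax _) (not_lt.mp hw)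
        refine Finset.sum_congr rfl (fun c _ => ?_)
        have hiff : (D (.inr (T.wadj w c)) < M) ↔ w = W c := by
          constructor
          · intro hlt
            by_contra hne
            rw [← hcross_eq hD w c hne, hwM] at hlt
            exact lt_irrefl _ hlt
          · intro he
            have := hcross_W hD c
            rw [← he, hwM] at this
            linarith
        refine if_congr hiff ?_ rfl
        rw [fWds, dif_neg hw]
    rw [Finset.sum_congr rfl (fun w _ => hinner w), Finset.sum_comm]
    have hlast : ∀ c : Fin 3,
        (∑ w : T.White, if w = W c then a none * inc ((w, c) : EdgeT T) v.1 else 0)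
          = a none * inc ((W c, c) : EdgeT T) v.1 := by
      intro c
      rw [Finset.sum_ite_eq' Finset.univ (W c)
        (fun w => a none * inc ((w, c) : EdgeT T) v.1)]
      simp
    rw [Finset.sum_congr rfl (fun c _ => hlast c), ← Finset.mul_sum,
      sum_inc_config hconf, mul_zero]
  rw [hblack, hwhite, sub_self]

end Region2

end Trinity

section AbstractConn

variable {E V : Type} [Fintype E] [Fintype V] [DecidableEq E] [DecidableEq V]

lemma d1A_single (p1 p2 : E → V) (e : E) :
    d1A p1 p2 (Pi.single e 1)
      = fun v => ((if p1 e = v then (1:ℚ) else 0) - (if p2 e = v then 1 else 0)) := by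
  funext v
  have hshow : d1A p1 p2 (Pi.single e 1) v
      = ∑ e' : E, (Pi.single e (1:ℚ) : E → ℚ) e' *
          ((if p1 e' = v then (1:ℚ) else 0) - (if p2 e' = v then 1 else 0)) := rfl
  rw [hshow, Finset.sum_eq_single e]
  · simp
  · intro e' _ hne
    rw [Pi.single_eq_of_ne hne, zero_mul]
  · intro h; exact absurd (Finset.mem_univ e) h

lemma connA_edge (p1 p2 : E → V) (e : E) (hne : p1 e ≠ p2 e) :
    (Pi.single (p1 e) 1 - Pi.single (p2 e) 1 : V → ℚ) ∈ LinearMap.range (d1A p1 p2) := by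
  refine ⟨Pi.single e 1, ?_⟩
  rw [d1A_single]
  funext v
  by_cases h1 : p1 e = v <;> by_cases h2 : p2 e = v
  · exact absurd (h1.trans h2.symm) hne
  · simp [Pi.single_apply, h1, h2, eq_comm]
  · simp [Pi.single_apply, h1, h2, eq_comm]
  · simp [Pi.single_apply, h1, h2, eq_comm]

lemma connR_refl (R : Submodule ℚ (V → ℚ)) (x : V) :
    (Pi.single x 1 - Pi.single x 1 : V → ℚ) ∈ R := by
  rw [sub_self]; exact Submodule.zero_mem _

lemma connR_symm {R : Submodule ℚ (V → ℚ)} {x y : V}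
    (h : (Pi.single x 1 - Pi.single y 1 : V → ℚ) ∈ R) :
    (Pi.single y 1 - Pi.single x 1 : V → ℚ) ∈ R := by
  have := Submodule.neg_mem _ h
  rwa [neg_sub] at this

lemma connR_trans {R : Submodule ℚ (V → ℚ)} {x y z : V}
    (h : (Pi.single x 1 - Pi.single y 1 : V → ℚ) ∈ R)
    (h' : (Pi.single y 1 - Pi.single z 1 : V → ℚ) ∈ R) :
    (Pi.single x 1 - Pi.single z 1 : V → ℚ) ∈ R := by
  have := Submodule.add_mem _ h h'
  rwa [sub_add_sub_cancel] at this

end AbstractConn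

namespace Trinity

variable {T : Trinity}

section Region3

variable {W : Fin 3 → T.White} {u : Fin 3 → T.Vertex}
variable {D : FaceT T → ℚ} {M : ℚ}

lemma fWs_pos (e : T.Esb D M) (hw : D (.inl e.1.1) < M) :
    T.fWs D M e = some ⟨.inl e.1.1, hw⟩ := by
  show T.fWds D M e.1 = _
  rw [fWds, dif_pos hw]

lemma fWs_neg (e : T.Esb D M) (hw : ¬ D (.inl e.1.1) < M) :
    T.fWs D M e = none := by
  show T.fWds D M e.1 = _
  rw [fWds, dif_neg hw]

/-- Face connectivity of the capped region. -/
lemma hfc_inst (hsurf : T.Surface)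
    (hD : ∀ e : EdgeT T, d2fun D e = (if e.1 = W e.2 then 1 else 0))
    (hMmax : ∀ f, D f ≤ M) (fM : FaceT T) (hfM : ¬ D fM < M) :
    ∀ a : T.Fsb D M → ℚ, (∀ e : T.Esb D M, a (T.fWs D M e) = a (T.fBs D M e)) →
      ∀ f f' : T.Fsb D M, a f = a f' := by
  intro a hae
  set ta : FaceT T → ℚ := fun f => if h : D f < M then a (some ⟨f, h⟩) else a none with hta
  have hta0 : ∀ e : EdgeT T, d2fun ta e = 0 := by
    rintro ⟨w, c⟩
    show ta (.inl w) - ta (.inr (T.wadj w c)) = 0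
    by_cases hb : D (.inr (T.wadj w c)) < M
    · have key := hae ⟨(w, c), hb⟩
      have hBs : ta (.inr (T.wadj w c)) = a (T.fBs D M ⟨(w, c), hb⟩) := by
        show (if h : D (.inr (T.wadj w c)) < M
            then a (some ⟨.inr (T.wadj w c), h⟩) else a none) = _
        rw [dif_pos hb]
        rfl
      by_cases hw : D (.inl w) < M
      · have hWsv : ta (.inl w) = a (T.fWs D M ⟨(w, c), hb⟩) := by
          rw [fWs_pos ⟨(w, c), hb⟩ hw]
          show (if h : D (.inl w) < M then a (some ⟨.inl w, h⟩) else a none) = _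
          rw [dif_pos hw]
        rw [hWsv, hBs, key, sub_self]
      · have hWsv : ta (.inl w) = a (T.fWs D M ⟨(w, c), hb⟩) := by
          rw [fWs_neg ⟨(w, c), hb⟩ hw]
          show (if h : D (.inl w) < M then a (some ⟨.inl w, h⟩) else a none) = _
          rw [dif_neg hw]
        rw [hWsv, hBs, key, sub_self]
    · have hwn : ¬ D (.inl w) < M := by
        have h1 : D (.inr (T.wadj w c)) ≤ D (.inl w) := hDmono hD w c
        have h2 : D (.inr (T.wadj w c)) = M := le_antisymm (hMmax _) (not_lt.mp hb)
        intro hcon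
        rw [h2] at h1
        exact absurd (lt_of_le_of_lt h1 hcon) (lt_irrefl M)
      have h1 : ta (.inl w) = a none := by
        show (if h : D (.inl w) < M then a (some ⟨.inl w, h⟩) else a none) = a none
        rw [dif_neg hwn]
      have h2 : ta (.inr (T.wadj w c)) = a none := by
        show (if h : D (.inr (T.wadj w c)) < M
            then a (some ⟨.inr (T.wadj w c), h⟩) else a none) = a none
        rw [dif_neg hb]
      rw [h1, h2, sub_self]
  have hconst := kerd2_const hsurf ta hta0
  have htaM : ta fM = a none := by
    show (if h : D fM < M then a (some ⟨fM, h⟩) else a none) = a none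
    rw [dif_neg hfM]
  have hrep : ∀ x : T.Fsb D M, a x = ta fM := by
    intro x
    match x with
    | none => rw [htaM]
    | some ⟨g, hg⟩ =>
        have h1 : ta g = a (some ⟨g, hg⟩) := by
          show (if h : D g < M then a (some ⟨g, h⟩) else a none) = _
          rw [dif_pos hg]
        rw [← h1, hconst g fM]
  intro f f'
  rw [hrep f, hrep f']

/-- Canonical vertex of a face. -/
def fvv : FaceT T → T.Vertex := fun f =>
  match f with
  | .inl w => T.wvert w 0
  | .inr b => T.bvert b 0

lemma fvv_mem (f : FaceT T) (h : D f < M) : T.VP D M (fvv f) := by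
  refine ⟨f, h, ?_⟩
  match f with
  | .inl w => exact ⟨0, rfl⟩
  | .inr b => exact ⟨0, rfl⟩

/-- Canonical vertex of a face of the region, as an element of `Vsb`. -/
def fvx (D : FaceT T → ℚ) (M : ℚ) (f : FaceT T) (h : D f < M) : T.Vsb D M :=
  ⟨fvv f, T.fvv_mem f h⟩

/-- Connectivity relation on the vertices of the region. -/
def Cn (D : FaceT T → ℚ) (M : ℚ) (x y : T.Vsb D M) : Prop :=
  (Pi.single x 1 - Pi.single y 1 : T.Vsb D M → ℚ)
    ∈ LinearMap.range (d1A (T.p1s D M) (T.p2s D M))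

lemma cn_edge (D : FaceT T → ℚ) (M : ℚ) (e : T.Esb D M) :
    T.Cn D M (T.p1s D M e) (T.p2s D M e) := by
  refine connA_edge _ _ e ?_
  intro h
  have hval : T.wvert e.1.1 (e.1.2 + 1) = T.wvert e.1.1 (e.1.2 + 2) := congrArg Subtype.val h
  have h1 := T.wvert_col e.1.1 (e.1.2 + 1)
  have h2 := T.wvert_col e.1.1 (e.1.2 + 2)
  rw [hval] at h1
  rw [h1] at h2
  exact (by decide : ∀ c : Fin 3, ¬ (c + 2 = c + 1)) e.1.2 h2.symm

lemma vp_of_white (w : T.White) (hw : D (.inl w) < M) (x : Fin 3) :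
    T.VP D M (T.wvert w x) := ⟨.inl w, hw, x, rfl⟩

lemma vp_of_black (b : T.Black) (hb : D (.inr b) < M) (x : Fin 3) :
    T.VP D M (T.bvert b x) := ⟨.inr b, hb, x, rfl⟩

lemma cn_step_white (hD : ∀ e : EdgeT T, d2fun D e = (if e.1 = W e.2 then 1 else 0))
    (w : T.White) (hw : D (.inl w) < M) (x : Fin 3) :
    T.Cn D M ⟨T.wvert w x, vp_of_white w hw x⟩
      ⟨T.wvert w (x + 1), vp_of_white w hw (x + 1)⟩ := by
  have hedge : D (.inr (T.wadj w (x + 2))) < M :=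
    lt_of_le_of_lt (hDmono (W := W) hD w (x + 2)) hw
  have hcn := T.cn_edge D M ⟨(w, x + 2), hedge⟩
  have e1 : T.p1s D M ⟨(w, x + 2), hedge⟩ = ⟨T.wvert w x, vp_of_white w hw x⟩ :=
    Subtype.ext (by show T.wvert w (x + 2 + 1) = T.wvert w x; rw [fin3_a21])
  have e2 : T.p2s D M ⟨(w, x + 2), hedge⟩
      = ⟨T.wvert w (x + 1), vp_of_white w hw (x + 1)⟩ :=
    Subtype.ext (by show T.wvert w (x + 2 + 2) = T.wvert w (x + 1); rw [fin3_a22])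
  rw [e1, e2] at hcn
  exact hcn

lemma cn_white (hD : ∀ e : EdgeT T, d2fun D e = (if e.1 = W e.2 then 1 else 0))
    (w : T.White) (hw : D (.inl w) < M) (a b : Fin 3)
    (pa : T.VP D M (T.wvert w a)) (pb : T.VP D M (T.wvert w b)) :
    T.Cn D M ⟨T.wvert w a, pa⟩ ⟨T.wvert w b, pb⟩ := by
  rcases (by decide : ∀ a b : Fin 3, b = a ∨ b = a + 1 ∨ b = a + 1 + 1) a b with h | h | h
  · subst h
    exact connR_refl _ _
  · subst h
    exact cn_step_white hD w hw a
  · subst h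
    exact connR_trans (cn_step_white (M := M) hD w hw a) (cn_step_white hD w hw (a + 1))

lemma cn_step_black (hD : ∀ e : EdgeT T, d2fun D e = (if e.1 = W e.2 then 1 else 0))
    (b : T.Black) (hb : D (.inr b) < M) (x : Fin 3) :
    T.Cn D M ⟨T.bvert b x, vp_of_black b hb x⟩
      ⟨T.bvert b (x + 1), vp_of_black b hb (x + 1)⟩ := by
  have hedge : D (.inr (T.wadj (T.badj b (x + 2)) (x + 2))) < M := by
    rw [T.wadj_badj]; exact hb
  have hcn := T.cn_edge D M ⟨(T.badj b (x + 2), x + 2), hedge⟩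
  have e1 : T.p1s D M ⟨(T.badj b (x + 2), x + 2), hedge⟩
      = ⟨T.bvert b x, vp_of_black b hb x⟩ := by
    refine Subtype.ext ?_
    show T.wvert (T.badj b (x + 2)) (x + 2 + 1) = T.bvert b x
    rw [fin3_a21]
    exact (bvert_badj b (x + 2) x (by
      intro h; exact (fin3_add_two_ne x) (by rw [← h]))).symm
  have e2 : T.p2s D M ⟨(T.badj b (x + 2), x + 2), hedge⟩
      = ⟨T.bvert b (x + 1), vp_of_black b hb (x + 1)⟩ := by
    refine Subtype.ext ?_
    show T.wvert (T.badj b (x + 2)) (x + 2 + 2) = T.bvert b (x + 1)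
    rw [fin3_a22]
    exact (bvert_badj b (x + 2) (x + 1) ((by decide : ∀ x : Fin 3, ¬ (x + 1 = x + 2)) x)).symm
  rw [e1, e2] at hcn
  exact hcn

lemma cn_black (hD : ∀ e : EdgeT T, d2fun D e = (if e.1 = W e.2 then 1 else 0))
    (b : T.Black) (hb : D (.inr b) < M) (x y : Fin 3)
    (px : T.VP D M (T.bvert b x)) (py : T.VP D M (T.bvert b y)) :
    T.Cn D M ⟨T.bvert b x, px⟩ ⟨T.bvert b y, py⟩ := by
  rcases (by decide : ∀ a b : Fin 3, b = a ∨ b = a + 1 ∨ b = a + 1 + 1) x y with h | h | h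
  · subst h
    exact connR_refl _ _
  · subst h
    exact cn_step_black hD b hb x
  · subst h
    exact connR_trans (cn_step_black (W := W) hD b hb x) (cn_step_black hD b hb (x + 1))

lemma hpbc (hD : ∀ e : EdgeT T, d2fun D e = (if e.1 = W e.2 then 1 else 0))
    (hWM : ∀ c, D (.inl (W c)) = M) (c : Fin 3) :
    D (.inr (T.wadj (W c) c)) < M := by
  have h1 := hcross_W hD c
  rw [hWM c] at h1
  linarith

lemma vp_of_u (hconf : T.CombConfig W u)
    (hD : ∀ e : EdgeT T, d2fun D e = (if e.1 = W e.2 then 1 else 0))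
    (hWM : ∀ c, D (.inl (W c)) = M) (c : Fin 3) : T.VP D M (u c) := by
  refine ⟨.inr (T.wadj (W (c + 1)) (c + 1)), hpbc hD hWM (c + 1), c, ?_⟩
  rw [T.bvert_wadj (W (c + 1)) (c + 1) c (by
    intro h; exact (fin3_add_one_ne c) (by rw [← h]))]
  exact hconf (c + 1) c (by intro h; exact (fin3_add_one_ne c) (by rw [← h]))

lemma cn_step_u (hconf : T.CombConfig W u)
    (hD : ∀ e : EdgeT T, d2fun D e = (if e.1 = W e.2 then 1 else 0))
    (hWM : ∀ c, D (.inl (W c)) = M) (x : Fin 3) :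
    T.Cn D M ⟨u x, vp_of_u hconf hD hWM x⟩ ⟨u (x + 1), vp_of_u hconf hD hWM (x + 1)⟩ := by
  have hedge : D (.inr (T.wadj (W (x + 2)) (x + 2))) < M := hpbc hD hWM (x + 2)
  have hcn := T.cn_edge D M ⟨(W (x + 2), x + 2), hedge⟩
  have e1 : T.p1s D M ⟨(W (x + 2), x + 2), hedge⟩ = ⟨u x, vp_of_u hconf hD hWM x⟩ := by
    refine Subtype.ext ?_
    show T.wvert (W (x + 2)) (x + 2 + 1) = u x
    rw [fin3_a21]
    exact hconf (x + 2) x (by intro h; exact (fin3_add_two_ne x) (by rw [← h]))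
  have e2 : T.p2s D M ⟨(W (x + 2), x + 2), hedge⟩
      = ⟨u (x + 1), vp_of_u hconf hD hWM (x + 1)⟩ := by
    refine Subtype.ext ?_
    show T.wvert (W (x + 2)) (x + 2 + 2) = u (x + 1)
    rw [fin3_a22]
    exact hconf (x + 2) (x + 1) ((by decide : ∀ x : Fin 3, ¬ (x + 1 = x + 2)) x)
  rw [e1, e2] at hcn
  exact hcn

lemma cn_u (hconf : T.CombConfig W u)
    (hD : ∀ e : EdgeT T, d2fun D e = (if e.1 = W e.2 then 1 else 0))
    (hWM : ∀ c, D (.inl (W c)) = M) (a b : Fin 3)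
    (pa : T.VP D M (u a)) (pb : T.VP D M (u b)) :
    T.Cn D M ⟨u a, pa⟩ ⟨u b, pb⟩ := by
  rcases (by decide : ∀ a b : Fin 3, b = a ∨ b = a + 1 ∨ b = a + 1 + 1) a b with h | h | h
  · subst h
    exact connR_refl _ _
  · subst h
    exact cn_step_u hconf hD hWM a
  · subst h
    exact connR_trans (cn_step_u hconf hD hWM a) (cn_step_u hconf hD hWM (a + 1))

lemma cn_face (hD : ∀ e : EdgeT T, d2fun D e = (if e.1 = W e.2 then 1 else 0))
    (f : FaceT T) (h : D f < M) (v : T.Vertex) (hv : faceVert f v) (pv : T.VP D M v) :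
    T.Cn D M ⟨v, pv⟩ (T.fvx D M f h) := by
  match f with
  | .inl w =>
      obtain ⟨c, hc⟩ := hv
      subst hc
      exact cn_white hD w h c 0 pv (T.fvv_mem (.inl w) h)
  | .inr b =>
      obtain ⟨c, hc⟩ := hv
      subst hc
      exact cn_black hD b h c 0 pv (T.fvv_mem (.inr b) h)

end Region3

end Trinity

namespace Trinity

variable {T : Trinity}

section Region4

variable {W : Fin 3 → T.White} {u : Fin 3 → T.Vertex}
variable {D : FaceT T → ℚ} {M : ℚ}

lemma cn_all (hsurf : T.Surface) (hconf : T.CombConfig W u)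
    (hD : ∀ e : EdgeT T, d2fun D e = (if e.1 = W e.2 then 1 else 0))
    (hMmax : ∀ f, D f ≤ M) (hWM : ∀ c, D (.inl (W c)) = M)
    (fM : FaceT T) (hfM : ¬ D fM < M) :
    ∀ x y : T.Vsb D M, T.Cn D M x y := by
  classical
  have main : ∀ x : T.Vsb D M, T.Cn D M x ⟨u 0, vp_of_u hconf hD hWM 0⟩ := by
    set aa : T.Fsb D M → ℚ := fun z => z.elim 1
      (fun p => if T.Cn D M (T.fvx D M p.1 p.2) ⟨u 0, vp_of_u hconf hD hWM 0⟩
        then 1 else 0) with haa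
    have hae : ∀ e : T.Esb D M, aa (T.fWs D M e) = aa (T.fBs D M e) := by
      rintro ⟨⟨w, c⟩, hb⟩
      have hp1B : T.Cn D M (T.p1s D M ⟨(w, c), hb⟩)
          (T.fvx D M (.inr (T.wadj w c)) hb) :=
        cn_face hD (.inr (T.wadj w c)) hb (T.wvert w (c + 1))
          ⟨c + 1, T.bvert_wadj w c (c + 1) (fin3_add_one_ne c)⟩
          (T.p1s_mem D M ⟨(w, c), hb⟩)
      by_cases hw : D (.inl w) < M
      · rw [fWs_pos ⟨(w, c), hb⟩ hw]
        show (if T.Cn D M (T.fvx D M (.inl w) hw) ⟨u 0, vp_of_u hconf hD hWM 0⟩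
            then (1:ℚ) else 0)
          = (if T.Cn D M (T.fvx D M (.inr (T.wadj w c)) hb) ⟨u 0, vp_of_u hconf hD hWM 0⟩
            then (1:ℚ) else 0)
        have hp1W : T.Cn D M (T.p1s D M ⟨(w, c), hb⟩) (T.fvx D M (.inl w) hw) :=
          cn_face hD (.inl w) hw (T.wvert w (c + 1)) ⟨c + 1, rfl⟩
            (T.p1s_mem D M ⟨(w, c), hb⟩)
        refine if_congr ⟨fun h => ?_, fun h => ?_⟩ rfl rfl
        · exact connR_trans (connR_symm hp1B) (connR_trans hp1W h)
        · exact connR_trans (connR_symm hp1W) (connR_trans hp1B h)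
      · rw [fWs_neg ⟨(w, c), hb⟩ hw]
        show (1:ℚ) = (if T.Cn D M (T.fvx D M (.inr (T.wadj w c)) hb)
            ⟨u 0, vp_of_u hconf hD hWM 0⟩ then (1:ℚ) else 0)
        have hwM : D (.inl w) = M := le_antisymm (hMmax _) (not_lt.mp hw)
        have hWc : w = W c := by
          by_contra hne
          have h2 := hcross_eq hD w c hne
          rw [hwM] at h2
          rw [← h2] at hb
          exact lt_irrefl M hb
        have hval : T.p1s D M ⟨(w, c), hb⟩
            = ⟨u (c + 1), vp_of_u hconf hD hWM (c + 1)⟩ := by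
          refine Subtype.ext ?_
          show T.wvert w (c + 1) = u (c + 1)
          rw [hWc]
          exact hconf c (c + 1) (fin3_add_one_ne c)
        have hcu : T.Cn D M (⟨u (c + 1), vp_of_u hconf hD hWM (c + 1)⟩ : T.Vsb D M)
            ⟨u 0, vp_of_u hconf hD hWM 0⟩ :=
          cn_u hconf hD hWM (c + 1) 0 _ _
        rw [hval] at hp1B
        have hfin : T.Cn D M (T.fvx D M (.inr (T.wadj w c)) hb)
            ⟨u 0, vp_of_u hconf hD hWM 0⟩ := connR_trans (connR_symm hp1B) hcu
        rw [if_pos hfin]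
    have hconstf := hfc_inst hsurf hD hMmax fM hfM aa hae
    have hclass : ∀ (f : FaceT T) (hf : D f < M),
        T.Cn D M (T.fvx D M f hf) ⟨u 0, vp_of_u hconf hD hWM 0⟩ := by
      intro f hf
      have hcf := hconstf (some ⟨f, hf⟩) none
      by_contra hcon
      have h1 : aa (some ⟨f, hf⟩) = 0 := by
        show (if T.Cn D M (T.fvx D M f hf) ⟨u 0, vp_of_u hconf hD hWM 0⟩
            then (1:ℚ) else 0) = 0
        rw [if_neg hcon]
      have h2 : aa none = 1 := rfl
      rw [h1, h2] at hcf
      norm_num at hcf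
    intro x
    obtain ⟨v, pv⟩ := x
    have hpv := pv
    obtain ⟨f, hf, hv⟩ := hpv
    exact connR_trans (cn_face hD f hf v hv pv) (hclass f hf)
  intro x y
  exact connR_trans (main x) (connR_symm (main y))

end Region4

end Trinity

/-- Subtype of a sum type splits as a sum of subtypes. -/
def sumSubtypeEquiv {α β : Type} (P : α ⊕ β → Prop) :
    {x : α ⊕ β // P x} ≃ {a : α // P (.inl a)} ⊕ {b : β // P (.inr b)} where
  toFun x := match x with
    | ⟨.inl a, h⟩ => .inl ⟨a, h⟩
    | ⟨.inr b, h⟩ => .inr ⟨b, h⟩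
  invFun y := match y with
    | .inl ⟨a, h⟩ => ⟨.inl a, h⟩
    | .inr ⟨b, h⟩ => ⟨.inr b, h⟩
  left_inv x := by rcases x with ⟨a | b, h⟩ <;> rfl
  right_inv y := by rcases y with ⟨a, h⟩ | ⟨b, h⟩ <;> rfl

namespace Trinity

variable {T : Trinity}

lemma D_nonpos (hpl : T.Planar) (s : T.State) {W : Fin 3 → T.White} {u : Fin 3 → T.Vertex}
    (hconf : T.CombConfig W u) (hnout : ∀ c, ¬ T.IsOuter (W c))
    (hsW : ∀ c, s.toFun (W c) = u (c + 1)) (o : T.White) (ho : T.IsOuter o)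
    (D : FaceT T → ℚ) (hD : ∀ e : EdgeT T, d2fun D e = (if e.1 = W e.2 then 1 else 0))
    (hDo : D (.inl o) = 0) : ∀ f, D f ≤ 0 := by
  classical
  by_contra hcon
  push_neg at hcon
  obtain ⟨f₀, hf₀⟩ := hcon
  obtain ⟨fM, _, hfM⟩ := Finset.exists_max_image (Finset.univ : Finset (FaceT T)) D
    ⟨.inl o, Finset.mem_univ _⟩
  set M := D fM with hM
  have hMmax : ∀ f, D f ≤ M := fun f => hfM f (Finset.mem_univ _)
  have hM0 : 0 < M := lt_of_lt_of_le hf₀ (hMmax f₀)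
  have hoM : D (.inl o) < M := by rw [hDo]; exact hM0
  have hfMn : ¬ D fM < M := lt_irrefl M
  -- uniqueness of the outer face
  have houuniq : ∀ w, T.IsOuter w → w = o := by
    intro w hw
    have : some w = some o := hw.symm.trans ho
    exact Option.some_injective _ this
  -- basic facts about the configuration
  have hucol : ∀ c, T.vcol (u c) = c := by
    intro c
    rw [← hconf (c + 1) c (fun h => (fin3_add_one_ne c) (by rw [← h]))]
    exact T.wvert_col _ c
  have hunr : ∀ c, ¬ T.IsRoot (u c) := by
    intro c
    have h1 : u c = s.toFun (W (c + 2)) := by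
      rw [hsW (c + 2), fin3_a21]
    rw [h1]
    exact s.not_root (W (c + 2)) (hnout (c + 2))
  -- counting σ and β
  set σp : ℕ := Fintype.card {w : T.White // D (.inl w) < M} with hσp
  set βp : ℕ := Fintype.card {b : T.Black // D (.inr b) < M} with hβp
  have cardEsb : Fintype.card (T.Esb D M) = 3 * βp := by
    rw [← Fintype.card_congr (T.eqvEB D M), Fintype.card_prod, Fintype.card_fin, mul_comm]
  -- split Esb by whether the white side is in the region
  have cardsplit : Fintype.card (T.Esb D M)
      = Fintype.card {e : T.Esb D M // D (.inl e.1.1) < M}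
        + Fintype.card {e : T.Esb D M // ¬ D (.inl e.1.1) < M} := by
    rw [← Fintype.card_sum]
    exact Fintype.card_congr (Equiv.sumCompl (fun e : T.Esb D M => D (.inl e.1.1) < M)).symm
  have eqv1 : {e : T.Esb D M // D (.inl e.1.1) < M} ≃ {q : EdgeT T // D (.inl q.1) < M} :=
    { toFun := fun e => ⟨e.1.1, e.2⟩
      invFun := fun q => ⟨⟨q.1, lt_of_le_of_lt (hDmono hD q.1.1 q.1.2) q.2⟩, q.2⟩
      left_inv := fun e => Subtype.ext (Subtype.ext rfl)
      right_inv := fun q => Subtype.ext rfl }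
  have card1 : Fintype.card {e : T.Esb D M // D (.inl e.1.1) < M} = 3 * σp := by
    rw [Fintype.card_congr eqv1,
      Fintype.card_congr (subProdEquiv (fun w : T.White => D (.inl w) < M)),
      Fintype.card_prod, Fintype.card_fin, mul_comm]
  have hWcross : ∀ (w : T.White) (c : Fin 3), D (.inr (T.wadj w c)) < M →
      ¬ D (.inl w) < M → w = W c ∧ D (.inl w) = M := by
    intro w c hb hnw
    have hwM : D (.inl w) = M := le_antisymm (hMmax _) (not_lt.mp hnw)
    refine ⟨?_, hwM⟩
    by_contra hne
    have h2 := hcross_eq hD w c hne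
    rw [hwM] at h2
    rw [← h2] at hb
    exact lt_irrefl M hb
  have eqv2 : {e : T.Esb D M // ¬ D (.inl e.1.1) < M} ≃ {c : Fin 3 // D (.inl (W c)) = M} :=
    { toFun := fun e => ⟨e.1.1.2, by
        obtain ⟨hWc, hM'⟩ := hWcross e.1.1.1 e.1.1.2 e.1.2 e.2
        rw [← hWc]; exact hM'⟩
      invFun := fun c => ⟨⟨(W c.1, c.1), by
          have h1 := hcross_W hD c.1
          rw [c.2] at h1
          linarith⟩, by rw [c.2]; exact lt_irrefl M⟩
      left_inv := fun e => by
        obtain ⟨hWc, _⟩ := hWcross e.1.1.1 e.1.1.2 e.1.2 e.2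
        exact Subtype.ext (Subtype.ext (Prod.ext hWc.symm rfl))
      right_inv := fun c => Subtype.ext rfl }
  set J : ℕ := Fintype.card {c : Fin 3 // D (.inl (W c)) = M} with hJ
  have card2 : Fintype.card {e : T.Esb D M // ¬ D (.inl e.1.1) < M} = J :=
    Fintype.card_congr eqv2
  have hJle : J ≤ 3 := by
    calc J ≤ Fintype.card (Fin 3) := Fintype.card_subtype_le _
      _ = 3 := Fintype.card_fin 3
  have hJeq : 3 * βp = 3 * σp + J := by
    rw [← cardEsb, cardsplit, card1, card2]
  have hJ03 : J = 0 ∨ J = 3 := by omega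
  -- J = 0 is impossible
  have hWM : ∀ c, D (.inl (W c)) = M := by
    rcases hJ03 with hJ0 | hJ3
    · exfalso
      have hempty : IsEmpty {c : Fin 3 // D (.inl (W c)) = M} :=
        Fintype.card_eq_zero_iff.mp hJ0
      have hnoc : ∀ c : Fin 3, D (.inl (W c)) ≠ M := fun c hc => hempty.false ⟨c, hc⟩
      set ind : FaceT T → ℚ := fun f => if D f < M then (1:ℚ) else 0 with hind
      have hind0 : ∀ e : EdgeT T, d2fun ind e = 0 := by
        rintro ⟨w, c⟩
        show ind (.inl w) - ind (.inr (T.wadj w c)) = 0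
        by_cases heq : w = W c
        · have hwlt : D (.inl w) < M := by
            rw [heq]
            exact lt_of_le_of_ne (hMmax _) (hnoc c)
          have hblt : D (.inr (T.wadj w c)) < M := lt_of_le_of_lt (hDmono hD w c) hwlt
          rw [hind]
          simp only [if_pos hwlt, if_pos hblt, sub_self]
        · have h2 := hcross_eq hD w c heq
          rw [hind]
          simp only [h2, sub_self]
      have hcst := kerd2_const hpl.1 ind hind0 (.inl o) fM
      rw [hind] at hcst
      simp only [if_pos hoM, if_neg hfMn] at hcst
      norm_num at hcst
    · intro c
      by_contra hc
      have := Fintype.card_subtype_lt (p := fun c : Fin 3 => D (.inl (W c)) = M) hc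
      rw [← hJ, Fintype.card_fin, hJ3] at this
      exact lt_irrefl 3 this
  have hJ3 : J = 3 := by
    rw [hJ]
    rw [Fintype.card_congr (Equiv.subtypeUnivEquiv hWM)]
    exact Fintype.card_fin 3
  have hβσ : βp = σp + 1 := by omega
  -- σ counts the outer face
  set σq : ℕ := Fintype.card {w : T.White // ¬ T.IsOuter w ∧ D (.inl w) < M} with hσq
  have hσsplit : σp = σq + 1 := by
    have h1 : Fintype.card {w : T.White // D (.inl w) < M}
        = Fintype.card {w : T.White // D (.inl w) < M ∧ T.IsOuter w}
          + Fintype.card {w : T.White // D (.inl w) < M ∧ ¬ T.IsOuter w} := by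
      rw [Fintype.card_subtype, Fintype.card_subtype, Fintype.card_subtype]
      rw [← Finset.filter_filter, ← Finset.filter_filter]
      exact (Finset.card_filter_add_card_filter_not
        (s := Finset.univ.filter (fun w : T.White => D (.inl w) < M))
        (p := T.IsOuter)).symm
    have h2 : Fintype.card {w : T.White // D (.inl w) < M ∧ T.IsOuter w} = 1 := by
      rw [Fintype.card_eq_one_iff]
      refine ⟨⟨o, hoM, ho⟩, ?_⟩
      rintro ⟨w, hw1, hw2⟩
      exact Subtype.ext (houuniq w hw2)
    have h3 : Fintype.card {w : T.White // D (.inl w) < M ∧ ¬ T.IsOuter w} = σq := by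
      rw [hσq]
      exact Fintype.card_congr ⟨fun x => ⟨x.1, x.2.2, x.2.1⟩, fun x => ⟨x.1, x.2.2, x.2.1⟩,
        fun x => rfl, fun x => rfl⟩
    rw [hσp, h1, h2, h3]
    omega
  -- lower bound on the number of vertices
  have vp_match : ∀ w : T.White, D (.inl w) < M → T.VP D M (s.toFun w) := by
    intro w hw
    obtain ⟨c, hc⟩ := s.incident w
    exact ⟨.inl w, hw, c, hc.symm⟩
  have cardVsb : σq + 6 ≤ Fintype.card (T.Vsb D M) := by
    have hinj : Function.Injective
        (fun x : ({w : T.White // ¬ T.IsOuter w ∧ D (.inl w) < M} ⊕ (Fin 3 ⊕ Fin 3)) =>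
          (Sum.elim (fun ww => (⟨s.toFun ww.1, vp_match ww.1 ww.2.2⟩ : T.Vsb D M))
            (Sum.elim (fun c => ⟨T.wvert o c, ⟨.inl o, hoM, c, rfl⟩⟩)
              (fun c => ⟨u c, vp_of_u hconf hD hWM c⟩)) x)) := by
      intro x y hxy
      have hval := congrArg Subtype.val hxy
      rcases x with xw | xc | xc <;> rcases y with yw | yc | yc <;>
        simp only [Sum.elim_inl, Sum.elim_inr] at hval ⊢
      · exact congrArg Sum.inl (Subtype.ext (s.injOn _ _ xw.2.1 yw.2.1 hval))
      · exfalso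
        exact s.not_root xw.1 xw.2.1 (by rw [hval]; exact ⟨o, ho, yc, rfl⟩)
      · exfalso
        have h1 : u yc = s.toFun (W (yc + 2)) := by rw [hsW (yc + 2), fin3_a21]
        rw [h1] at hval
        have h2 := s.injOn _ _ xw.2.1 (hnout (yc + 2)) hval
        have h3 := xw.2.2
        rw [h2, hWM (yc + 2)] at h3
        exact lt_irrefl M h3
      · exfalso
        exact s.not_root yw.1 yw.2.1 (by rw [← hval]; exact ⟨o, ho, xc, rfl⟩)
      · have h1 := T.wvert_col o xc
        rw [hval, T.wvert_col o yc] at h1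
        rw [h1]
      · exfalso
        exact hunr yc (by rw [← hval]; exact ⟨o, ho, xc, rfl⟩)
      · exfalso
        have h1 : u xc = s.toFun (W (xc + 2)) := by rw [hsW (xc + 2), fin3_a21]
        rw [h1] at hval
        have h2 := s.injOn _ _ (hnout (xc + 2)) yw.2.1 hval
        have h3 := yw.2.2
        rw [← h2, hWM (xc + 2)] at h3
        exact lt_irrefl M h3
      · exfalso
        exact hunr xc (by rw [hval]; exact ⟨o, ho, yc, rfl⟩)
      · have h1 := hucol xc
        rw [hval, hucol yc] at h1
        rw [h1]
    have hcard := Fintype.card_le_of_injective _ hinj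
    rw [Fintype.card_sum, Fintype.card_sum, Fintype.card_fin] at hcard
    rw [← hσq] at hcard
    have hbridge : Fintype.card {v : T.Vertex // T.VP D M v} = Fintype.card (T.Vsb D M) :=
      Fintype.card_congr (Equiv.refl _)
    omega
  -- Euler characteristic bound
  have hNV : Nonempty (T.Vsb D M) := ⟨⟨T.wvert o 0, ⟨.inl o, hoM, 0, rfl⟩⟩⟩
  have hNF : Nonempty (T.Fsb D M) := ⟨none⟩
  have hchi := abstract_chi (T.fWs D M) (T.fBs D M) (T.p1s D M) (T.p2s D M)
    (hdd_inst hconf hD hMmax hWM) (hfc_inst hpl.1 hD hMmax fM hfMn)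
    (cn_all hpl.1 hconf hD hMmax hWM fM hfMn)
  -- face count
  have cardFsb : Fintype.card (T.Fsb D M) = (σp + βp) + 1 := by
    show Fintype.card (Option {f : FaceT T // D f < M}) = _
    rw [Fintype.card_option]
    rw [Fintype.card_congr (sumSubtypeEquiv (fun f : FaceT T => D f < M)),
      Fintype.card_sum]
  have cardEsb2 : Fintype.card (T.Esb D M) = 3 * σp + 3 := by
    rw [cardEsb]; omega
  rw [cardFsb, cardEsb2] at hchi
  omega

end Trinity

namespace Trinity

variable {T : Trinity}

/-- The 1-chain associated with a state. -/
noncomputable def Bch (x : T.State) : EdgeT T → ℚ := fun e =>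
  if T.IsOuter e.1 then 0 else
    ((if T.vcol (x.toFun e.1) + 1 = e.2 then (1:ℚ) else 0) -
     (if T.vcol (x.toFun e.1) + 2 = e.2 then 1 else 0))

/-- The 2-chain of the corner whites of a move. -/
noncomputable def Ech (W : Fin 3 → T.White) : FaceT T → ℚ := fun f =>
  match f with
  | .inl w => if ∃ c, w = W c then 1 else 0
  | .inr _ => 0

lemma fin3_ident : ∀ c₀ c : Fin 3,
    (((if c₀ = c then (1:ℚ) else 0) - (if c₀ + 1 = c then 1 else 0)) -
      ((if c₀ + 2 = c then 1 else 0) - (if c₀ = c then 1 else 0)))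
    = 3 * (if c₀ = c then 1 else 0) - 1 := by
  intro c₀ c
  rcases (by decide : ∀ a b : Fin 3, b = a ∨ b = a + 1 ∨ b = a + 2) c₀ c with h | h | h
  · subst h
    rw [if_pos rfl, if_neg (fin3_add_one_ne c), if_neg (fin3_add_two_ne c)]
    norm_num
  · subst h
    rw [if_neg (fun hh => (fin3_add_one_ne c₀) hh.symm), if_pos rfl,
      if_neg ((by decide : ∀ a : Fin 3, ¬ (a + 2 = a + 1)) c₀)]
    norm_num
  · subst h
    rw [if_neg (fun hh => (fin3_add_two_ne c₀) hh.symm),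
      if_neg ((by decide : ∀ a : Fin 3, ¬ (a + 1 = a + 2)) c₀), if_pos rfl]
    norm_num

lemma d2fun_add (a b : FaceT T → ℚ) (e : EdgeT T) :
    d2fun (a + b) e = d2fun a e + d2fun b e := by
  simp only [d2fun, Pi.add_apply]
  ring

lemma move_id {s t : T.State} {W : Fin 3 → T.White} {u : Fin 3 → T.Vertex}
    (hconf : T.CombConfig W u) (hnout : ∀ c, ¬ T.IsOuter (W c))
    (hsW : ∀ c, s.toFun (W c) = u (c + 1)) (htW : ∀ c, t.toFun (W c) = u (c + 2))
    (hfr : ∀ w, (∀ c, w ≠ W c) → t.toFun w = s.toFun w)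
    (hWinj : Function.Injective W) :
    ∀ e : EdgeT T, Bch t e - Bch s e
      = 3 * (if e.1 = W e.2 then 1 else 0) - d2fun (Ech W) e := by
  have hucol : ∀ c, T.vcol (u c) = c := by
    intro c
    rw [← hconf (c + 1) c (fun h => (fin3_add_one_ne c) (by rw [← h]))]
    exact T.wvert_col _ c
  rintro ⟨w, c⟩
  have hE : d2fun (Ech W) ((w, c) : EdgeT T)
      = (if ∃ c₀, w = W c₀ then (1:ℚ) else 0) := by
    show Ech W (.inl w) - Ech W (.inr (T.wadj w c)) = _
    show (if ∃ c₀, w = W c₀ then (1:ℚ) else 0) - 0 = _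
    rw [sub_zero]
  rw [hE]
  by_cases hex : ∃ c₀, w = W c₀
  · obtain ⟨c₀, rfl⟩ := hex
    have hno := hnout c₀
    have hvs : T.vcol (s.toFun (W c₀)) = c₀ + 1 := by rw [hsW c₀]; exact hucol (c₀ + 1)
    have hvt : T.vcol (t.toFun (W c₀)) = c₀ + 2 := by rw [htW c₀]; exact hucol (c₀ + 2)
    have hBt : Bch t ((W c₀, c) : EdgeT T)
        = (if c₀ = c then (1:ℚ) else 0) - (if c₀ + 1 = c then 1 else 0) := by
      show (if T.IsOuter (W c₀) then (0:ℚ) else _) = _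
      rw [if_neg hno, hvt, fin3_a21, fin3_a22]
    have hBs : Bch s ((W c₀, c) : EdgeT T)
        = (if c₀ + 2 = c then (1:ℚ) else 0) - (if c₀ = c then 1 else 0) := by
      show (if T.IsOuter (W c₀) then (0:ℚ) else _) = _
      rw [if_neg hno, hvs, fin3_a11, fin3_a12]
    have hex' : ∃ c₁ : Fin 3, W c₀ = W c₁ := ⟨c₀, rfl⟩
    have hiff : (((W c₀, c) : EdgeT T).1 = W (((W c₀, c) : EdgeT T).2)) = (c₀ = c) := by
      refine propext ⟨fun hh => hWinj hh, fun hh => by rw [show W c₀ = W c from by rw [hh]]⟩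
    rw [hBt, hBs, if_pos hex']
    simp only [hiff]
    exact fin3_ident c₀ c
  · push_neg at hex
    have hBt : Bch t ((w, c) : EdgeT T) = Bch s ((w, c) : EdgeT T) := by
      show (if T.IsOuter w then (0:ℚ) else _) = (if T.IsOuter w then (0:ℚ) else _)
      rw [hfr w hex]
    rw [hBt, if_neg (hex c), if_neg (fun h => (hex h.choose) h.choose_spec)]
    ring
  
lemma cwmove_pack (hpl : T.Planar) (o : T.White) (ho : T.IsOuter o)
    {s t : T.State} (h : T.CWMove s t) :
    ∃ Ds Es : FaceT T → ℚ,
      (∀ e, Bch t e - Bch s e = 3 * d2fun Ds e - d2fun Es e) ∧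
      (∀ f, Ds f ≤ 0) ∧ (∃ b : T.Black, Ds (.inr b) < 0) ∧ Ds (.inl o) = 0 ∧
      Es (.inl o) = 0 ∧ (∀ b : T.Black, Es (.inr b) = 0) := by
  obtain ⟨W, u, hconf, hnout, hsW, htW, hfr⟩ := h
  have hWinj : Function.Injective W := by
    intro c c' hWeq
    have h1 : u (c + 1) = u (c' + 1) := by rw [← hsW c, ← hsW c', hWeq]
    have h2 : T.vcol (u (c + 1)) = c + 1 := by
      rw [← hconf (c + 1 + 1) (c + 1) (fun h => (fin3_add_one_ne (c + 1)) (by rw [← h]))]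
      exact T.wvert_col _ _
    rw [h1] at h2
    rw [← hconf (c' + 1 + 1) (c' + 1) (fun h => (fin3_add_one_ne (c' + 1)) (by rw [← h])),
      T.wvert_col] at h2
    exact (add_right_cancel h2).symm
  obtain ⟨D, hD, hDo⟩ := exists_D hpl s W u hconf o ho
  have hDn := D_nonpos hpl s hconf hnout hsW o ho D hD hDo
  refine ⟨D, Ech W, ?_, hDn, ⟨T.wadj (W 0) 0, ?_⟩, hDo, ?_, fun b => rfl⟩
  · intro e
    rw [move_id hconf hnout hsW htW hfr hWinj e, hD e]
  · have h1 := hD ((W 0, 0) : EdgeT T)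
    rw [if_pos rfl] at h1
    have h2 : D (.inl (W 0)) ≤ 0 := hDn _
    simp only [d2fun] at h1
    linarith
  · show (if ∃ c, o = W c then (1:ℚ) else 0) = 0
    rw [if_neg]
    rintro ⟨c, hc⟩
    exact hnout c (hc ▸ ho)

lemma transgen_pack (hpl : T.Planar) (o : T.White) (ho : T.IsOuter o)
    {s t : T.State} (h : Relation.TransGen T.CWMove s t) :
    ∃ Ds Es : FaceT T → ℚ,
      (∀ e, Bch t e - Bch s e = 3 * d2fun Ds e - d2fun Es e) ∧
      (∀ f, Ds f ≤ 0) ∧ (∃ b : T.Black, Ds (.inr b) < 0) ∧ Ds (.inl o) = 0 ∧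
      Es (.inl o) = 0 ∧ (∀ b : T.Black, Es (.inr b) = 0) := by
  induction h with
  | single hmv => exact cwmove_pack hpl o ho hmv
  | tail hab hmv ih =>
      obtain ⟨D1, E1, hid1, hnp1, ⟨b1, hb1⟩, hD1o, hE1o, hE1b⟩ := ih
      obtain ⟨D2, E2, hid2, hnp2, ⟨b2, hb2⟩, hD2o, hE2o, hE2b⟩ := cwmove_pack hpl o ho hmv
      refine ⟨D1 + D2, E1 + E2, ?_, ?_, ⟨b2, ?_⟩, ?_, ?_, ?_⟩
      · intro e
        rw [d2fun_add, d2fun_add]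
        have g1 := hid1 e
        have g2 := hid2 e
        linarith
      · intro f
        have := hnp1 f
        have := hnp2 f
        simp only [Pi.add_apply]
        linarith
      · have := hnp1 (.inr b2)
        simp only [Pi.add_apply]
        linarith
      · simp only [Pi.add_apply, hD1o, hD2o, add_zero]
      · simp only [Pi.add_apply, hE1o, hE2o, add_zero]
      · intro b
        simp only [Pi.add_apply, hE1b b, hE2b b, add_zero]

end Trinity
/-- Proposition 4.1.  Planar trinities do not have recurrent
states: no state admits a non-empty sequence of clockwise moves returning to
itself, i.e. every connected component of the state transition graph is
acyclic. -/
theorem planar_has_no_recurrent_states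
    (T : Trinity) (hpl : T.Planar) (s : T.State) :
    ¬ Relation.TransGen T.CWMove s s := by
  intro h
  have hos : T.outer.isSome := hpl.2.1
  set o := T.outer.get hos with ho'
  have ho : T.IsOuter o := by
    show T.outer = some o
    exact (Option.some_get hos).symm
  obtain ⟨Ds, Es, hid, hnp, ⟨b₀, hb₀⟩, hDso, hEso, hEsb⟩ := Trinity.transgen_pack hpl o ho h
  have hzero : ∀ e : Trinity.EdgeT T, 3 * Trinity.d2fun Ds e - Trinity.d2fun Es e = 0 := by
    intro e
    have hh := hid e
    rw [sub_self] at hh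
    linarith
  set Z : Trinity.FaceT T → ℚ := fun f => 3 * Ds f - Es f with hZdef
  have hZ : ∀ e, Trinity.d2fun Z e = 0 := by
    intro e
    have h1 : Trinity.d2fun Z e = 3 * Trinity.d2fun Ds e - Trinity.d2fun Es e := by
      simp only [Trinity.d2fun, hZdef]
      ring
    rw [h1]
    exact hzero e
  have hconst := Trinity.kerd2_const hpl.1 Z hZ (.inr b₀) (.inl o)
  have h1 : Z (.inl o) = 0 := by
    simp only [hZdef]
    rw [hDso, hEso]
    ring
  have h2 : Z (.inr b₀) < 0 := by
    simp only [hZdef]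
    rw [hEsb b₀]
    linarith
  rw [hconst, h1] at h2
  exact lt_irrefl 0 h2
end

section
/- Suppose that a sequence of clockwise moves on an irreducible trinity starts and ends with the same state. Then in the sequence, each black triangle of the trinity is changed the same number of times. -/
namespace TrinityAux

variable {T : Trinity}

lemma bvert_inj (b : T.Black) {x y : Fin 3} (h : T.bvert b x = T.bvert b y) : x = y := by
  rw [← T.bvert_col b x, h, T.bvert_col b y]

lemma key (w : T.White) :
    ∀ {l : List T.Black} {s t : T.State},
      T.Walk s (l.map fun b => (b, true)) t → ∀ v : Fin 3,
      l.count (T.wadj w (v+2)) + (if T.vcol (t.toFun w) = v then 1 else 0)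
        = l.count (T.wadj w (v+1)) + (if T.vcol (s.toFun w) = v then 1 else 0) := by
  intro l
  induction l with
  | nil =>
    intro s t h v
    cases h
    simp
  | cons b l ih =>
    intro s t h v
    cases h with
    | @cw _ s' _ _ _ hmove hwalk =>
      have IH := ih hwalk v
      simp only [List.count_cons]
      by_cases hc : ∃ c, w = T.badj b c
      · obtain ⟨c, hc⟩ := hc
        have hs : s.toFun w = T.bvert b (c+1) := by rw [hc]; exact hmove.1.2 c
        have hs' : s'.toFun w = T.bvert b (c+2) := by rw [hc]; exact hmove.2.1 c
        have hiff : ∀ x : Fin 3, T.wadj w x = b ↔ x = c := by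
          intro x
          constructor
          · intro hx
            have hw' : w = T.badj b x := by rw [← hx, T.badj_wadj]
            have h1 : s'.toFun w = T.bvert b (x+2) := by rw [hw']; exact hmove.2.1 x
            have h2 : x + 2 = c + 2 := bvert_inj b (h1.symm.trans hs')
            exact add_right_cancel h2
          · intro hx
            subst hx
            rw [hc, T.wadj_badj]
        have hiff' : ∀ x : Fin 3, b = T.wadj w x ↔ x = c := fun x => eq_comm.trans (hiff x)
        simp only [beq_iff_eq]
        have h1 : (if b = T.wadj w (v+2) then (1:ℕ) else 0)
            = (if v+2 = c then (1:ℕ) else 0) := by simp [hiff']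
        have h2 : (if b = T.wadj w (v+1) then (1:ℕ) else 0)
            = (if v+1 = c then (1:ℕ) else 0) := by simp [hiff']
        have h3 : T.vcol (s'.toFun w) = c+2 := by rw [hs', T.bvert_col]
        have h4 : T.vcol (s.toFun w) = c+1 := by rw [hs, T.bvert_col]
        rw [h3] at IH
        rw [h1, h2, h4]
        have hid : (if v+2 = c then (1:ℕ) else 0) + (if c+2 = v then 1 else 0)
            = (if v+1 = c then 1 else 0) + (if c+1 = v then 1 else 0) := by
          fin_cases v <;> fin_cases c <;> simp
        generalize l.count (T.wadj w (v+2)) = A at *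
        generalize l.count (T.wadj w (v+1)) = B at *
        generalize (if T.vcol (t.toFun w) = v then (1:ℕ) else 0) = X at *
        generalize (if v+2 = c then (1:ℕ) else 0) = j1 at *
        generalize (if v+1 = c then (1:ℕ) else 0) = j2 at *
        generalize (if c+2 = v then (1:ℕ) else 0) = Z at *
        generalize (if c+1 = v then (1:ℕ) else 0) = Y at *
        omega
      · push_neg at hc
        have heq : s'.toFun w = s.toFun w := hmove.2.2 w hc
        have hb1 : ¬ (T.wadj w (v+2) = b) := fun hx => hc (v+2) (by rw [← hx, T.badj_wadj])
        have hb2 : ¬ (T.wadj w (v+1) = b) := fun hx => hc (v+1) (by rw [← hx, T.badj_wadj])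
        rw [heq] at IH
        have hb1' : ¬ (b = T.wadj w (v+2)) := fun hx => hb1 hx.symm
        have hb2' : ¬ (b = T.wadj w (v+1)) := fun hx => hb2 hx.symm
        simp only [beq_iff_eq, if_neg hb1', if_neg hb2']
        omega

lemma all_eq {s : T.State} {l : List T.Black} (h : T.Walk s (l.map fun b => (b, true)) s)
    (w : T.White) : ∀ x y : Fin 3, l.count (T.wadj w x) = l.count (T.wadj w y) := by
  have hk : ∀ v : Fin 3, l.count (T.wadj w (v+2)) = l.count (T.wadj w (v+1)) := by
    intro v
    have := key w h v
    omega
  have r1 : (1:Fin 3) + 2 = 0 := rfl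
  have r1' : (1:Fin 3) + 1 = 2 := rfl
  have r2 : (2:Fin 3) + 2 = 1 := rfl
  have r2' : (2:Fin 3) + 1 = 0 := rfl
  have e1 : l.count (T.wadj w 0) = l.count (T.wadj w 2) := by
    have := hk 1; rwa [r1, r1'] at this
  have e2 : l.count (T.wadj w 1) = l.count (T.wadj w 0) := by
    have := hk 2; rwa [r2, r2'] at this
  have aux : ∀ x : Fin 3, l.count (T.wadj w x) = l.count (T.wadj w 0) := by
    intro x
    fin_cases x
    · rfl
    · exact e2
    · exact e1.symm
  exact fun x y => (aux x).trans (aux y).symm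

end TrinityAux

/-- Proposition 6.4.  Suppose that a sequence of clockwise
moves on an irreducible trinity starts and ends with the same state.  Then in
the sequence, each black triangle of the trinity is changed the same number of
times. -/
theorem clockwise_cycle_changes_all_triangles_equally
    (T : Trinity) (hsurf : T.Surface) (hirr : T.Irreducible)
    (s : T.State) (l : List T.Black) (h : T.CWWalk s l s) :
    ∀ b b' : T.Black, l.count b = l.count b' := by
  intro b b'
  have hw := fun w => TrinityAux.all_eq h w
  have hadj : ∀ w w', T.WAdj w w' → l.count (T.wadj w 0) = l.count (T.wadj w' 0) := by
    rintro w w' ⟨c, c', hcc⟩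
    calc l.count (T.wadj w 0) = l.count (T.wadj w c) := hw w 0 c
      _ = l.count (T.wadj w' c') := by rw [hcc]
      _ = l.count (T.wadj w' 0) := hw w' c' 0
  have hconst : ∀ w w' : T.White, l.count (T.wadj w 0) = l.count (T.wadj w' 0) := by
    intro w w'
    induction hsurf.1 w w' with
    | refl => rfl
    | tail _ hstep ih => exact ih.trans (hadj _ _ hstep)
  have hb : ∀ b : T.Black, l.count b = l.count (T.wadj (T.badj b 0) 0) := by
    intro b; rw [T.wadj_badj]
  rw [hb b, hb b', hconst (T.badj b 0) (T.badj b' 0)]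
end

section
/- Let T be an irreducible toric trinity with n black triangles. Then for any state s lying in a cyclic connected component of the state transition graph of T, there is a linear ordering Δ_1, …, Δ_n of the black triangles of T such that, starting from s, clockwise moves can be performed on Δ_1, …, Δ_n consecutively in that order (each triangle being changed exactly once), and after these n moves the state s recurs. -/
namespace ClockProof
open Trinity
open Fin.NatCast Fin.CommRing

variable {T : Trinity}

lemma fin3_add_one_ne : ∀ c : Fin 3, c + 1 ≠ c := by decide

lemma fin3_add_two_ne : ∀ c : Fin 3, c + 2 ≠ c := by decide

lemma wvert_inj {w : T.White} {a b : Fin 3} (h : T.wvert w a = T.wvert w b) : a = b := by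
  have := congrArg T.vcol h
  rwa [T.wvert_col, T.wvert_col] at this

lemma bvert_eq_wvert (b : T.Black) {c c' : Fin 3} (h : c' ≠ c) :
    T.bvert b c' = T.wvert (T.badj b c) c' := by
  conv_lhs => rw [← T.wadj_badj b c]
  exact T.bvert_wadj _ _ _ h

noncomputable def phase (s : T.State) (w : T.White) : Fin 3 := (s.incident w).choose

lemma toFun_eq_phase (s : T.State) (w : T.White) : s.toFun w = T.wvert w (phase s w) :=
  (s.incident w).choose_spec

lemma phase_eq {s : T.State} {w : T.White} {c : Fin 3} (h : s.toFun w = T.wvert w c) :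
    phase s w = c := wvert_inj (by rw [← toFun_eq_phase, h])

lemma state_eq {s t : T.State} (h : ∀ w, phase s w = phase t w) : s = t := by
  have hf : s.toFun = t.toFun := funext fun w => by
    rw [toFun_eq_phase, toFun_eq_phase, h w]
  cases s; cases t
  simp only at hf
  subst hf
  rfl

def hits (b : T.Black) (w : T.White) : Prop := ∃ c : Fin 3, w = T.badj b c

instance hits.dec (b : T.Black) (w : T.White) : Decidable (hits b w) :=
  Fintype.decidableExistsFintype

/-- touch count -/
def tc (w : T.White) (l : List T.Black) : ℕ := l.countP fun b => decide (hits b w)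

lemma tc_append (w : T.White) (l₁ l₂ : List T.Black) :
    tc w (l₁ ++ l₂) = tc w l₁ + tc w l₂ := List.countP_append

lemma tc_pos {w : T.White} {l : List T.Black} {b : T.Black} (hb : b ∈ l) (h : hits b w) :
    1 ≤ tc w l := by
  refine List.countP_pos_iff.mpr ⟨b, hb, ?_⟩
  simpa using h


lemma move_src {s t : T.State} {b : T.Black} (h : T.CWMoveAt s t b) (c : Fin 3) :
    phase s (T.badj b c) = c + 1 :=
  phase_eq (by rw [h.1.2 c, bvert_eq_wvert b (fin3_add_one_ne c)])

lemma move_tgt {s t : T.State} {b : T.Black} (h : T.CWMoveAt s t b) (c : Fin 3) :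
    phase t (T.badj b c) = c + 2 :=
  phase_eq (by rw [h.2.1 c, bvert_eq_wvert b (fin3_add_two_ne c)])

lemma move_untouched {s t : T.State} {b : T.Black} (h : T.CWMoveAt s t b) {w : T.White}
    (hw : ¬ hits b w) : phase t w = phase s w := by
  have ht : t.toFun w = s.toFun w := h.2.2 w (fun c hc => hw ⟨c, hc⟩)
  exact phase_eq (by rw [ht, toFun_eq_phase])

lemma move_touched {s t : T.State} {b : T.Black} (h : T.CWMoveAt s t b) {w : T.White}
    (hw : hits b w) : phase t w = phase s w + 1 := by
  obtain ⟨c, rfl⟩ := hw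
  rw [move_tgt h c, move_src h c]
  ring

def Enabled (s : T.State) (b : T.Black) : Prop := ∀ c, phase s (T.badj b c) = c + 1

lemma enabled_of_move {s t : T.State} {b : T.Black} (h : T.CWMoveAt s t b) : Enabled s b :=
  move_src h

lemma enabled_badj_inj {s : T.State} {b : T.Black} (h : Enabled s b) {c c' : Fin 3}
    (e : T.badj b c = T.badj b c') : c = c' := by
  have h1 := h c
  rw [e, h c'] at h1
  exact add_right_cancel h1.symm

lemma enabled_toFun {s : T.State} {b : T.Black} (h : Enabled s b) (c : Fin 3) :
    s.toFun (T.badj b c) = T.bvert b (c + 1) := by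
  rw [toFun_eq_phase, h c, bvert_eq_wvert b (fin3_add_one_ne c)]

lemma not_isOuter (hout : T.outer = none) (w : T.White) : ¬ T.IsOuter w := by
  intro hw
  rw [Trinity.IsOuter, hout] at hw
  cases hw

lemma not_isRoot (hout : T.outer = none) (v : T.Vertex) : ¬ T.IsRoot v := by
  rintro ⟨w, hw, -⟩
  exact not_isOuter hout w hw

lemma move_of_enabled (hout : T.outer = none) {s : T.State} {b : T.Black}
    (h : Enabled s b) : ∃ t, T.CWMoveAt s t b := by
  classical
  set f : T.White → T.Vertex := fun w =>
    if hw : hits b w then T.bvert b (hw.choose + 2) else s.toFun w with hfdef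
  have hchoose : ∀ (w : T.White) (hw : hits b w), T.badj b hw.choose = w :=
    fun w hw => hw.choose_spec.symm
  have hfb : ∀ c : Fin 3, f (T.badj b c) = T.bvert b (c + 2) := by
    intro c
    have hw : hits b (T.badj b c) := ⟨c, rfl⟩
    have : hw.choose = c := enabled_badj_inj h (by rw [hchoose _ hw])
    simp only [hfdef, dif_pos hw, this]
  have hfn : ∀ w : T.White, ¬ hits b w → f w = s.toFun w := by
    intro w hw
    simp only [hfdef, dif_neg hw]
  have key421 : ∀ d : Fin 3, d + 2 + 2 = d + 1 := by decide
  have key112 : ∀ d : Fin 3, d + 1 + 1 = d + 2 := by decide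
  have hincident : ∀ w, ∃ c, f w = T.wvert w c := by
    intro w
    by_cases hw : hits b w
    · obtain ⟨c, rfl⟩ := hw
      exact ⟨c + 2, by rw [hfb c, bvert_eq_wvert b (fin3_add_two_ne c)]⟩
    · rw [hfn w hw]; exact s.incident w
  have hinj : ∀ w w', f w = f w' → w = w' := by
    intro w w' he
    by_cases hw : hits b w <;> by_cases hw' : hits b w'
    · obtain ⟨c, rfl⟩ := hw; obtain ⟨c', rfl⟩ := hw'
      rw [hfb c, hfb c'] at he
      have : c + 2 = c' + 2 := by
        have := congrArg T.vcol he
        rwa [T.bvert_col, T.bvert_col] at this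
      rw [add_right_cancel this]
    · obtain ⟨c, rfl⟩ := hw
      rw [hfb c, hfn w' hw'] at he
      have : s.toFun (T.badj b (c + 1)) = s.toFun w' := by
        rw [enabled_toFun h (c + 1), key112 c]; exact he
      have := s.injOn _ _ (not_isOuter hout _) (not_isOuter hout _) this
      exact absurd ⟨c + 1, this.symm⟩ hw'
    · obtain ⟨c', rfl⟩ := hw'
      rw [hfb c', hfn w hw] at he
      have : s.toFun w = s.toFun (T.badj b (c' + 1)) := by
        rw [enabled_toFun h (c' + 1), key112 c']; exact he
      have := s.injOn _ _ (not_isOuter hout _) (not_isOuter hout _) this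
      exact absurd ⟨c' + 1, this⟩ hw
    · rw [hfn w hw, hfn w' hw'] at he
      exact s.injOn _ _ (not_isOuter hout _) (not_isOuter hout _) he
  have hsurj : ∀ v : T.Vertex, ∃ w, f w = v := by
    intro v
    obtain ⟨w₀, -, hw₀⟩ := s.surj v (not_isRoot hout v)
    by_cases hw : hits b w₀
    · obtain ⟨d, rfl⟩ := hw
      refine ⟨T.badj b (d + 2), ?_⟩
      rw [hfb (d + 2), key421 d, ← enabled_toFun h d, hw₀]
    · exact ⟨w₀, by rw [hfn w₀ hw, hw₀]⟩
  refine ⟨⟨f, hincident, fun w w' _ _ => hinj w w',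
      fun w _ => not_isRoot hout _,
      fun v _ => ⟨(hsurj v).choose, not_isOuter hout _, (hsurj v).choose_spec⟩,
      fun w hw => absurd hw (not_isOuter hout w)⟩, ?_, ?_, ?_⟩
  · constructor
    · intro w _ harr
      have hv : T.vcol (s.toFun w) = phase s w := by
        rw [toFun_eq_phase, T.wvert_col]
      rw [Trinity.State.arrowBlack, hv] at harr
      have hwb : w = T.badj b (phase s w) := by rw [← harr, T.badj_wadj]
      have := h (phase s w)
      rw [← hwb] at this
      exact fin3_add_one_ne (phase s w) this.symm
    · exact enabled_toFun h
  · exact hfb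
  · intro w hc
    exact hfn w (fun ⟨c, hcc⟩ => hc c hcc)

inductive Legal : T.State → List T.Black → T.State → Prop
  | nil (s : T.State) : Legal s [] s
  | cons {s t u : T.State} {b : T.Black} {l : List T.Black} :
      T.CWMoveAt s t b → Legal t l u → Legal s (b :: l) u

lemma legal_append {s x t : T.State} {l₁ l₂ : List T.Black}
    (h₁ : Legal s l₁ x) (h₂ : Legal x l₂ t) : Legal s (l₁ ++ l₂) t := by
  induction h₁ with
  | nil => exact h₂
  | cons mv _ ih => exact Legal.cons mv (ih h₂)

lemma legal_split {s t : T.State} {l₁ l₂ : List T.Black}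
    (h : Legal s (l₁ ++ l₂) t) : ∃ x, Legal s l₁ x ∧ Legal x l₂ t := by
  induction l₁ generalizing s with
  | nil => exact ⟨s, Legal.nil s, h⟩
  | cons b l ih =>
    cases h with
    | cons mv h' =>
      obtain ⟨x, hx1, hx2⟩ := ih h'
      exact ⟨x, Legal.cons mv hx1, hx2⟩

lemma legal_cwwalk {s t : T.State} {l : List T.Black} :
    Legal s l t ↔ T.CWWalk s l t := by
  constructor
  · intro h
    induction h with
    | nil s => exact Trinity.Walk.nil s
    | cons mv _ ih => exact Trinity.Walk.cw mv ih
  · intro h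
    rw [Trinity.CWWalk] at h
    induction l generalizing s with
    | nil => cases h; exact Legal.nil _
    | cons b l ih =>
      cases h with
      | cw mv h' => exact Legal.cons mv (ih h')

lemma move_det {s t t' : T.State} {b : T.Black} (h : T.CWMoveAt s t b)
    (h' : T.CWMoveAt s t' b) : t = t' := by
  apply state_eq
  intro w
  by_cases hw : hits b w
  · obtain ⟨c, rfl⟩ := hw
    rw [move_tgt h c, move_tgt h' c]
  · rw [move_untouched h hw, move_untouched h' hw]

lemma legal_det {s t t' : T.State} {l : List T.Black} (h : Legal s l t)
    (h' : Legal s l t') : t = t' := by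
  induction h generalizing t' with
  | nil => cases h'; rfl
  | cons mv _ ih =>
    cases h' with
    | cons mv' hl' =>
      exact ih (by rwa [move_det mv' mv] at hl')

lemma legal_phase {s t : T.State} {l : List T.Black} (h : Legal s l t) (w : T.White) :
    phase t w = phase s w + ((tc w l : ℕ) : Fin 3) := by
  induction h with
  | nil => simp [tc]
  | @cons s' t' u' b' l' mv _ ih =>
    by_cases hw : hits b' w
    · rw [ih]
      have : tc w (b' :: l') = tc w l' + 1 := by
        simp [tc, List.countP_cons, hw]
      rw [this, move_touched mv hw]
      push_cast
      ring
    · rw [ih]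
      have : tc w (b' :: l') = tc w l' := by
        simp [tc, List.countP_cons, hw]
      rw [this, move_untouched mv hw]


lemma countP_split {α : Type*} {p : α → Bool} :
    ∀ (l : List α) (j : ℕ), j < l.countP p →
      ∃ a l₁ l₂, l = l₁ ++ a :: l₂ ∧ p a ∧ l₁.countP p = j := by
  intro l
  induction l with
  | nil => intro j hj; simp at hj
  | cons x l ih =>
    intro j hj
    by_cases hx : p x
    · cases j with
      | zero => exact ⟨x, [], l, rfl, hx, rfl⟩
      | succ j =>
        rw [List.countP_cons, if_pos hx] at hj
        obtain ⟨a, l₁, l₂, rfl, ha, hc⟩ := ih j (by omega)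
        exact ⟨a, x :: l₁, l₂, rfl, ha, by rw [List.countP_cons, if_pos hx, hc]⟩
    · rw [List.countP_cons, if_neg hx, add_zero] at hj
      obtain ⟨a, l₁, l₂, rfl, ha, hc⟩ := ih j hj
      exact ⟨a, x :: l₁, l₂, rfl, ha, by rw [List.countP_cons, if_neg hx, add_zero, hc]⟩

lemma wadj_of_badj {b : T.Black} {w : T.White} {c : Fin 3} (h : w = T.badj b c) :
    b = T.wadj w c := by rw [h, T.wadj_badj]

lemma legal_touch {s t : T.State} {l : List T.Black} (h : Legal s l t) (w : T.White)
    (j : ℕ) (hj : j < tc w l) :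
    ∃ m l₁ l₂, l = l₁ ++ m :: l₂ ∧ hits m w ∧ tc w l₁ = j ∧
      m = T.wadj w (phase s w + (j : Fin 3) + 2) := by
  obtain ⟨m, l₁, l₂, rfl, hm, hc⟩ := countP_split l j hj
  have hmw : hits m w := by simpa using hm
  obtain ⟨x, hx1, hx2⟩ := legal_split h
  cases hx2 with
  | cons mv _ =>
    obtain ⟨c, hwc⟩ := hmw
    have h1 : phase x w = c + 1 := by rw [hwc]; exact move_src mv c
    have hc' : tc w l₁ = j := hc
    have h2 : phase x w = phase s w + ((j : ℕ) : Fin 3) := by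
      rw [legal_phase hx1 w, hc']
    refine ⟨m, l₁, l₂, rfl, ⟨c, hwc⟩, hc', ?_⟩
    have hcval : c = phase s w + ((j : ℕ) : Fin 3) + 2 := by
      have : c + 1 = phase s w + ((j : ℕ) : Fin 3) := by rw [← h1, h2]
      have h3 : c + 1 + 2 = c := by
        have : ∀ d : Fin 3, d + 1 + 2 = d := by decide
        exact this c
      rw [← h3, this]
    rw [← hcval]
    exact wadj_of_badj hwc

lemma fin3_cast_zero_ge {n : ℕ} (h : ((n : ℕ) : Fin 3) = 0) (h1 : 1 ≤ n) : 3 ≤ n := by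
  rcases n with _ | _ | _ | n
  · omega
  · exfalso; rw [Nat.cast_one] at h; exact absurd h (by decide)
  · exfalso
    have : ((2 : ℕ) : Fin 3) = 2 := by decide
    rw [this] at h; exact absurd h (by decide)
  · omega

lemma fin3_cast_two_ge {n : ℕ} (h : ((n : ℕ) : Fin 3) = 2) : 2 ≤ n := by
  rcases n with _ | _ | n
  · exfalso; rw [Nat.cast_zero] at h; exact absurd h (by decide)
  · exfalso; rw [Nat.cast_one] at h; exact absurd h (by decide)
  · omega

lemma cycle_tc_zero {s : T.State} {l : List T.Black} (h : Legal s l s) (w : T.White) :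
    ((tc w l : ℕ) : Fin 3) = 0 := by
  have h2 := legal_phase h w
  nth_rewrite 1 [← add_zero (phase s w)] at h2
  exact (add_left_cancel h2).symm

lemma cycle_good {s : T.State} {l : List T.Black} (h : Legal s l s) {w : T.White}
    (hw : 1 ≤ tc w l) (c : Fin 3) : T.wadj w c ∈ l := by
  have h3 : 3 ≤ tc w l := fin3_cast_zero_ge (cycle_tc_zero h w) hw
  set j : ℕ := (c - 2 - phase s w : Fin 3).val with hj
  have hjlt : j < tc w l := lt_of_lt_of_le (Fin.is_lt _) h3
  obtain ⟨m, l₁, l₂, hsplit, -, -, hm⟩ := legal_touch h w j hjlt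
  have hcast : ((j : ℕ) : Fin 3) = c - 2 - phase s w := by
    rw [hj, Fin.cast_val_eq_self]
  rw [hcast] at hm
  have : phase s w + (c - 2 - phase s w) + 2 = c := by ring
  rw [this] at hm
  rw [← hm, hsplit]
  exact List.mem_append.mpr (Or.inr (List.mem_cons_self))

lemma cycle_all_mem (hconn : ∀ w w' : T.White, Relation.ReflTransGen T.WAdj w w')
    {s : T.State} {l : List T.Black} (h : Legal s l s) (hne : l ≠ []) (b : T.Black) :
    b ∈ l := by
  obtain ⟨b₀, hb₀⟩ := List.exists_mem_of_ne_nil l hne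
  have good : ∀ w : T.White, (∃ b' ∈ l, hits b' w) → ∀ c, T.wadj w c ∈ l := by
    rintro w ⟨b', hb', hw'⟩ c
    exact cycle_good h (tc_pos hb' hw') c
  have w₀good : ∀ c, T.wadj (T.badj b₀ 0) c ∈ l := good _ ⟨b₀, hb₀, ⟨0, rfl⟩⟩
  have main : ∀ w : T.White, ∀ c, T.wadj w c ∈ l := by
    intro w
    have hpath := hconn (T.badj b₀ 0) w
    induction hpath with
    | refl => exact w₀good
    | @tail w₁ w₂ _ hadj ih =>
      obtain ⟨c, c', he⟩ := hadj
      have hm : T.wadj w₁ c ∈ l := ih c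
      have : hits (T.wadj w₁ c) w₂ := ⟨c', by rw [he, T.badj_wadj]⟩
      exact good w₂ ⟨T.wadj w₁ c, hm, this⟩
  have := main (T.badj b 0) 0
  rwa [T.wadj_badj] at this

lemma nondeg_of_mem {s t : T.State} {l : List T.Black} (h : Legal s l t) {b : T.Black}
    (hb : b ∈ l) {c c' : Fin 3} (e : T.badj b c = T.badj b c') : c = c' := by
  obtain ⟨l₁, l₂, rfl⟩ := List.append_of_mem hb
  obtain ⟨x, -, hx2⟩ := legal_split h
  cases hx2 with
  | cons mv _ => exact enabled_badj_inj (enabled_of_move mv) e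

lemma no_touch_of_enabled {t x : T.State} {α : List T.Black} {b : T.Black}
    (h : Legal t α x) (hb : Enabled t b) (hnb : b ∉ α) {w : T.White} (hw : hits b w) :
    tc w α = 0 := by
  by_contra hne
  have h1 : 1 ≤ tc w α := Nat.one_le_iff_ne_zero.mpr hne
  obtain ⟨m, l₁, l₂, hsplit, -, -, hm⟩ := legal_touch h w 0 h1
  obtain ⟨c, hwc⟩ := hw
  have hp : phase t w = c + 1 := by rw [hwc]; exact hb c
  have : m = b := by
    rw [hm, Nat.cast_zero, add_zero, hp]
    have : c + 1 + 2 = c := by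
      have : ∀ d : Fin 3, d + 1 + 2 = d := by decide
      exact this c
    rw [this, ← wadj_of_badj hwc]
  rw [this] at hsplit
  exact hnb (hsplit ▸ List.mem_append.mpr (Or.inr (List.mem_cons_self)))

lemma parallel (hout : T.outer = none) {t x : T.State} {α : List T.Black}
    (h : Legal t α x) :
    ∀ u : T.State, (∀ m ∈ α, ∀ w, hits m w → phase u w = phase t w) →
      ∃ x', Legal u α x' := by
  induction h with
  | nil => exact fun u _ => ⟨u, Legal.nil u⟩
  | @cons t t₁ x m l mv hl ih =>
    intro u hyp
    have hen : Enabled u m := by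
      intro c
      rw [hyp m (List.mem_cons_self) (T.badj m c) ⟨c, rfl⟩]
      exact move_src mv c
    obtain ⟨u₁, mv'⟩ := move_of_enabled hout hen
    obtain ⟨x', hx'⟩ := ih u₁ (by
      intro m' hm' w hw
      by_cases hmw : hits m w
      · rw [move_touched mv' hmw, move_touched mv hmw,
          hyp m (List.mem_cons_self) w hmw]
      · rw [move_untouched mv' hmw, move_untouched mv hmw,
          hyp m' (List.mem_cons_of_mem _ hm') w hw])
    exact ⟨x', Legal.cons mv' hx'⟩


lemma mem_first_split {β : Type*} {b : β} {l : List β} (h : b ∈ l) :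
    ∃ l₁ l₂, l = l₁ ++ b :: l₂ ∧ b ∉ l₁ := by
  induction l with
  | nil => cases h
  | cons a l ih =>
    by_cases hab : b = a
    · exact ⟨[], l, by rw [hab]; rfl, List.not_mem_nil⟩
    · obtain ⟨l₁, l₂, rfl, hn⟩ := ih (by
        rcases List.mem_cons.mp h with h' | h'
        · exact absurd h' hab
        · exact h')
      exact ⟨a :: l₁, l₂, rfl, by
        intro hc
        rcases List.mem_cons.mp hc with h' | h'
        · exact hab h'
        · exact hn h'⟩

lemma mem_last_split {β : Type*} [DecidableEq β] {b : β} {l : List β} (h : b ∈ l) :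
    ∃ l₁ l₂, l = l₁ ++ b :: l₂ ∧ b ∉ l₂ := by
  induction l with
  | nil => cases h
  | cons a l ih =>
    by_cases hbl : b ∈ l
    · obtain ⟨l₁, l₂, rfl, hn⟩ := ih hbl
      exact ⟨a :: l₁, l₂, rfl, hn⟩
    · have hab : b = a := by
        rcases List.mem_cons.mp h with h' | h'
        · exact h'
        · exact absurd h' hbl
      exact ⟨[], l, by rw [hab]; rfl, hbl⟩

/-- the recurrence property -/
def Rec (t : T.State) : Prop := ∃ l : List T.Black, l ≠ [] ∧ Legal t l t

lemma dir1 (hout : T.outer = none)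
    (hconn : ∀ w w' : T.White, Relation.ReflTransGen T.WAdj w w')
    {t u : T.State} {b : T.Black} (mv : T.CWMoveAt t u b) (hR : Rec t) : Rec u := by
  obtain ⟨L, hne, hL⟩ := hR
  have hbL : b ∈ L := cycle_all_mem hconn hL hne b
  obtain ⟨α, β, rfl, hnα⟩ := mem_first_split hbL
  obtain ⟨x, hα, hx2⟩ := legal_split hL
  cases hx2 with
  | @cons _ y _ _ _ mvx hβ =>
    have hNT : ∀ w, hits b w → tc w α = 0 :=
      fun w hw => no_touch_of_enabled hα (enabled_of_move mv) hnα hw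
    obtain ⟨x', hux'⟩ := parallel hout hα u (by
      intro m hm w hw
      by_cases hbw : hits b w
      · exact absurd (hNT w hbw) (Nat.one_le_iff_ne_zero.mp (tc_pos hm hw))
      · exact move_untouched mv hbw)
    have hxy : x' = y := by
      apply state_eq
      intro w
      by_cases hbw : hits b w
      · rw [legal_phase hux' w, hNT w hbw, Nat.cast_zero, add_zero,
          move_touched mv hbw, move_touched mvx hbw, legal_phase hα w,
          hNT w hbw, Nat.cast_zero, add_zero]
      · rw [legal_phase hux' w, move_untouched mv hbw, move_untouched mvx hbw,
          legal_phase hα w]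
    refine ⟨α ++ (β ++ [b]), by simp, ?_⟩
    refine legal_append (hxy ▸ hux') (legal_append hβ ?_)
    exact Legal.cons mv (Legal.nil u)

lemma dir2 (hout : T.outer = none)
    (hconn : ∀ w w' : T.White, Relation.ReflTransGen T.WAdj w w')
    {t u : T.State} {b : T.Black} (mv : T.CWMoveAt t u b) (hR : Rec u) : Rec t := by
  obtain ⟨L, hne, hL⟩ := hR
  have hbL : b ∈ L := cycle_all_mem hconn hL hne b
  obtain ⟨α, β, rfl, hnβ⟩ := mem_last_split hbL
  obtain ⟨x, hα, hx2⟩ := legal_split hL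
  cases hx2 with
  | @cons _ y _ _ _ mvx hβ =>
    have hA : ∀ w, hits b w → tc w β = 0 := by
      rintro w ⟨c, rfl⟩
      have h1 : phase u (T.badj b c) = phase y (T.badj b c) + ((tc (T.badj b c) β : ℕ) : Fin 3) :=
        legal_phase hβ _
      rw [move_tgt mvx c, move_tgt mv c] at h1
      nth_rewrite 1 [← add_zero (c + 2)] at h1
      have hz : ((tc (T.badj b c) β : ℕ) : Fin 3) = 0 := (add_left_cancel h1).symm
      by_contra hne0
      have h3 : 3 ≤ tc (T.badj b c) β :=
        fin3_cast_zero_ge hz (Nat.one_le_iff_ne_zero.mpr hne0)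
      obtain ⟨m, l₁, l₂, hsplit, -, -, hm⟩ := legal_touch hβ (T.badj b c) 2 (by omega)
      have hmb : m = b := by
        rw [hm, move_tgt mvx c]
        have hc2 : ((2 : ℕ) : Fin 3) = 2 := by decide
        rw [hc2]
        have : c + 2 + 2 + 2 = c := by
          have : ∀ d : Fin 3, d + 2 + 2 + 2 = d := by decide
          exact this c
        rw [this, ← wadj_of_badj rfl]
      exact hnβ (hmb ▸ hsplit ▸ List.mem_append.mpr (Or.inr (List.mem_cons_self)))
    obtain ⟨z, hxz⟩ := parallel hout hβ x (by
      intro m hm w hw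
      by_cases hbw : hits b w
      · exact absurd (hA w hbw) (Nat.one_le_iff_ne_zero.mp (tc_pos hm hw))
      · exact (move_untouched mvx hbw).symm)
    have hzt : z = t := by
      apply state_eq
      intro w
      by_cases hbw : hits b w
      · obtain ⟨c, rfl⟩ := hbw
        rw [legal_phase hxz _, hA _ ⟨c, rfl⟩, Nat.cast_zero, add_zero,
          move_src mvx c, move_src mv c]
      · have hu : phase u w = phase x w + ((tc w β : ℕ) : Fin 3) := by
          rw [legal_phase hβ w, move_untouched mvx hbw]
        rw [legal_phase hxz w, ← hu, ← move_untouched mv hbw]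
    refine ⟨b :: (α ++ β), by simp, Legal.cons mv (legal_append hα (hzt ▸ hxz))⟩

lemma transport (hout : T.outer = none)
    (hconn : ∀ w w' : T.White, Relation.ReflTransGen T.WAdj w w')
    {s s₀ : T.State} {l : List (T.Black × Bool)} (hw : T.Walk s l s₀) (h : Rec s₀) :
    Rec s := by
  induction hw with
  | nil => exact h
  | cw mv _ ih => exact dir2 hout hconn mv (ih h)
  | ccw mv _ ih => exact dir1 hout hconn mv (ih h)


variable (T) in
/-- first-occurrence sublist -/
def extL (l : List T.Black) : List T.Black :=
  l.foldl (fun acc b => if b ∈ acc then acc else acc ++ [b]) []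

lemma extL_gen_mem {l : List T.Black} :
    ∀ (acc : List T.Black) (a : T.Black),
      a ∈ l.foldl (fun acc b => if b ∈ acc then acc else acc ++ [b]) acc ↔
        a ∈ acc ∨ a ∈ l := by
  induction l with
  | nil => simp
  | cons b l ih =>
    intro acc a
    rw [List.foldl_cons, ih]
    by_cases hb : b ∈ acc
    · rw [if_pos hb]
      constructor
      · rintro (h | h)
        · exact Or.inl h
        · exact Or.inr (List.mem_cons_of_mem _ h)
      · rintro (h | h)
        · exact Or.inl h
        · rcases List.mem_cons.mp h with rfl | h
          · exact Or.inl hb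
          · exact Or.inr h
    · rw [if_neg hb]
      simp only [List.mem_append, List.mem_singleton, List.mem_cons]
      tauto

lemma extL_mem {l : List T.Black} {a : T.Black} : a ∈ extL T l ↔ a ∈ l := by
  rw [extL, extL_gen_mem]
  simp

lemma extL_gen_nodup {l : List T.Black} :
    ∀ acc : List T.Black, acc.Nodup →
      (l.foldl (fun acc b => if b ∈ acc then acc else acc ++ [b]) acc).Nodup := by
  induction l with
  | nil => intro acc h; exact h
  | cons b l ih =>
    intro acc hacc
    rw [List.foldl_cons]
    by_cases hb : b ∈ acc
    · rw [if_pos hb]; exact ih acc hacc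
    · rw [if_neg hb]
      refine ih _ ?_
      simp [List.nodup_append, hacc, hb]; exact fun a ha hab => hb (hab ▸ ha)

lemma extL_nodup (l : List T.Black) : (extL T l).Nodup := extL_gen_nodup [] List.nodup_nil

lemma extL_concat (l : List T.Black) (b : T.Black) :
    extL T (l ++ [b]) = if b ∈ extL T l then extL T l else extL T l ++ [b] := by
  rw [extL, extL, List.foldl_append, List.foldl_cons, List.foldl_nil]

lemma f1 {s t : T.State} {ρ σ : List T.Black} {b b' : T.Black} {w : T.White}
    (h : Legal s (ρ ++ b :: σ) t) (hb : b ∈ ρ) (hw : hits b w) (hw' : hits b' w) :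
    b' ∈ ρ := by
  obtain ⟨ρ₁, ρ₂, rfl⟩ := List.append_of_mem hb
  rw [List.append_assoc] at h
  obtain ⟨a, hρ₁, ha2⟩ := legal_split h
  cases ha2 with
  | @cons _ a₁ _ _ _ mv₁ ha₁ =>
    obtain ⟨x₀, hρ₂, hx2⟩ := legal_split (l₁ := ρ₂) (l₂ := b :: σ) ha₁
    cases hx2 with
    | @cons _ x₁ _ _ _ mv₂ _ =>
      obtain ⟨c, hwc⟩ := hw
      have hp1 : phase a₁ w = c + 2 := by rw [hwc]; exact move_tgt mv₁ c
      have hp2 : phase x₀ w = c + 1 := by rw [hwc]; exact move_src mv₂ c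
      have hτ : ((tc w ρ₂ : ℕ) : Fin 3) = 2 := by
        have h4 := legal_phase hρ₂ w
        rw [hp1, hp2] at h4
        have : ∀ d e : Fin 3, d + 1 = d + 2 + e → e = 2 := by decide
        exact this c _ h4
      have hτ2 : 2 ≤ tc w ρ₂ := fin3_cast_two_ge hτ
      have hseg : Legal a (b :: ρ₂) x₀ := Legal.cons mv₁ hρ₂
      obtain ⟨c'', hwc''⟩ := hw'
      have htcseg : 3 ≤ tc w (b :: ρ₂) := by
        have hbw : hits b w := ⟨c, hwc⟩
        have : tc w (b :: ρ₂) = tc w ρ₂ + 1 := by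
          simp [tc, List.countP_cons, hbw]
        omega
      set j : ℕ := (c'' - c : Fin 3).val with hj
      have hjlt : j < tc w (b :: ρ₂) := lt_of_lt_of_le (Fin.is_lt _) htcseg
      obtain ⟨m, l₁, l₂, hsplit, -, -, hm⟩ := legal_touch hseg w j hjlt
      have hpa : phase a w = c + 1 := by rw [hwc]; exact move_src mv₁ c
      have hmb' : m = b' := by
        rw [hm, hpa, hj, Fin.cast_val_eq_self]
        have : c + 1 + (c'' - c) + 2 = c'' := by
          have h5 : ∀ d e : Fin 3, d + 1 + (e - d) + 2 = e := by decide
          exact h5 c c''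
        rw [this, ← wadj_of_badj hwc'']
      have : b' ∈ b :: ρ₂ := by
        rw [← hmb', hsplit]
        exact List.mem_append.mpr (Or.inr (List.mem_cons_self))
      rcases List.mem_cons.mp this with rfl | h'
      · exact hb
      · exact List.mem_append.mpr (Or.inr (List.mem_cons_of_mem _ h'))

lemma sim (hout : T.outer = none) {s t : T.State} {L : List T.Black}
    (hL : Legal s L t) :
    ∀ (σ ρ : List T.Black) (x y : T.State), L = ρ ++ σ → Legal s ρ x →
      Legal s (extL T ρ) y →
      (∀ w, phase y w = phase x w ∨ ∀ b', hits b' w → b' ∈ ρ) →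
      ∃ z, Legal s (extL T L) z := by
  intro σ
  induction σ with
  | nil =>
    intro ρ x y hρ _ hy _
    rw [hρ, List.append_nil]
    exact ⟨y, hy⟩
  | cons b σ' ih =>
    intro ρ x y hρ hx hy hinv
    subst hρ
    obtain ⟨x₀, hx₀, hx2⟩ := legal_split hL
    cases hx2 with
    | @cons _ x₁ _ _ _ mv hσ' =>
      have hxx : x = x₀ := legal_det hx hx₀
      subst hxx
      by_cases hb : b ∈ ρ
      · have hext : extL T (ρ ++ [b]) = extL T ρ := by
          rw [extL_concat, if_pos (extL_mem.mpr hb)]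
        refine ih (ρ ++ [b]) x₁ y (by simp) (legal_append hx (Legal.cons mv (Legal.nil _)))
          (by rw [hext]; exact hy) ?_
        intro w
        by_cases hbw : hits b w
        · exact Or.inr fun b' hb' => List.mem_append.mpr (Or.inl (f1 hL hb hbw hb'))
        · rcases hinv w with h' | h'
          · exact Or.inl (by rw [h', move_untouched mv hbw])
          · exact Or.inr fun b' hb' => List.mem_append.mpr (Or.inl (h' b' hb'))
      · have hphase : ∀ w, hits b w → phase y w = phase x w := by
          intro w hw
          rcases hinv w with h' | h'
          · exact h'
          · exact absurd (h' b hw) hb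
        have hen : Enabled y b := by
          intro c
          rw [hphase (T.badj b c) ⟨c, rfl⟩]
          exact move_src mv c
        obtain ⟨y₁, mv'⟩ := move_of_enabled hout hen
        have hext : extL T (ρ ++ [b]) = extL T ρ ++ [b] := by
          rw [extL_concat, if_neg (fun hc => hb (extL_mem.mp hc))]
        refine ih (ρ ++ [b]) x₁ y₁ (by simp) (legal_append hx (Legal.cons mv (Legal.nil _)))
          (by rw [hext]; exact legal_append hy (Legal.cons mv' (Legal.nil _))) ?_
        intro w
        by_cases hbw : hits b w
        · exact Or.inl (by
            rw [move_touched mv' hbw, move_touched mv hbw, hphase w hbw])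
        · rcases hinv w with h' | h'
          · exact Or.inl (by
              rw [move_untouched mv' hbw, move_untouched mv hbw, h'])
          · exact Or.inr fun b' hb' => List.mem_append.mpr (Or.inl (h' b' hb'))


lemma extraction (hout : T.outer = none)
    (hconn : ∀ w w' : T.White, Relation.ReflTransGen T.WAdj w w')
    {s : T.State} {L : List T.Black} (hL : Legal s L s) (hne : L ≠ []) :
    ∃ l : List T.Black, l.Nodup ∧ (∀ b, b ∈ l) ∧ Legal s l s := by
  classical
  have hall : ∀ b, b ∈ L := cycle_all_mem hconn hL hne
  obtain ⟨z, hz⟩ := sim hout hL L [] s s (by simp) (Legal.nil s) (Legal.nil s)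
    (fun w => Or.inl rfl)
  have hmem : ∀ b, b ∈ extL T L := fun b => extL_mem.mpr (hall b)
  have hnd : (extL T L).Nodup := extL_nodup L
  have hwadj_inj : ∀ (w : T.White) (c c' : Fin 3), T.wadj w c = T.wadj w c' → c = c' := by
    intro w c c' he
    have h1 : T.badj (T.wadj w c) c = w := T.badj_wadj w c
    have h2 : T.badj (T.wadj w c) c' = w := by rw [he]; exact T.badj_wadj w c'
    exact nondeg_of_mem hL (hall (T.wadj w c)) (h1.trans h2.symm)
  have htc : ∀ w, tc w (extL T L) = 3 := by
    intro w
    have hfil : ((extL T L).filter fun b => decide (hits b w)).toFinset =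
        ({T.wadj w 0, T.wadj w 1, T.wadj w 2} : Finset T.Black) := by
      ext b
      simp only [List.mem_toFinset, List.mem_filter, decide_eq_true_eq,
        Finset.mem_insert, Finset.mem_singleton]
      constructor
      · rintro ⟨-, c, hwc⟩
        have hb : b = T.wadj w c := wadj_of_badj hwc
        fin_cases c
        · exact Or.inl hb
        · exact Or.inr (Or.inl hb)
        · exact Or.inr (Or.inr hb)
      · rintro (rfl | rfl | rfl)
        · exact ⟨hmem _, 0, (T.badj_wadj w 0).symm⟩
        · exact ⟨hmem _, 1, (T.badj_wadj w 1).symm⟩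
        · exact ⟨hmem _, 2, (T.badj_wadj w 2).symm⟩
    have hcard : ({T.wadj w 0, T.wadj w 1, T.wadj w 2} : Finset T.Black).card = 3 :=
      Finset.card_eq_three.mpr ⟨_, _, _,
        fun he => absurd (hwadj_inj w 0 1 he) (by decide),
        fun he => absurd (hwadj_inj w 0 2 he) (by decide),
        fun he => absurd (hwadj_inj w 1 2 he) (by decide), rfl⟩
    have hndf : ((extL T L).filter fun b => decide (hits b w)).Nodup := hnd.filter _
    have := List.toFinset_card_of_nodup hndf
    rw [hfil, hcard] at this
    rw [tc, List.countP_eq_length_filter]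
    omega
  have hzs : z = s := by
    apply state_eq
    intro w
    rw [legal_phase hz w, htc w]
    have h30 : ((3 : ℕ) : Fin 3) = 0 := by decide
    rw [h30, add_zero]
  exact ⟨extL T L, hnd, hmem, hzs ▸ hz⟩

end ClockProof

open ClockProof in

/-- Theorem 6.7.  Let `T` be an irreducible toric trinity.
For any state `s` lying in a cyclic connected component of the state transition
graph of `T`, there is a linear ordering of the black triangles of `T` (a list
enumerating each black triangle exactly once) such that, starting from `s`,
clockwise moves can be performed on the black triangles consecutively in that
order, and after these moves the state `s` recurs. -/
theorem cyclic_state_recurs_after_one_turn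
    (T : Trinity) (ht : T.Toric) (hirr : T.Irreducible) (s : T.State)
    (hcyc : ∃ s₀ : T.State, T.Reaches s s₀ ∧ T.Recurrent s₀) :
    ∃ l : List T.Black, l.Nodup ∧ (∀ b : T.Black, b ∈ l) ∧ T.CWWalk s l s := by
  obtain ⟨hsurf, hout, -⟩ := ht
  have hconn := hsurf.1
  obtain ⟨s₀, ⟨lw, hwalk⟩, lr, hlrne, hlr⟩ := hcyc
  have hrec₀ : Rec s₀ := ⟨lr, hlrne, legal_cwwalk.mpr hlr⟩
  have hrec : Rec s := transport hout hconn hwalk hrec₀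
  obtain ⟨L, hne, hL⟩ := hrec
  obtain ⟨l, hnd, hmem, hleg⟩ := extraction hout hconn hL hne
  exact ⟨l, hnd, hmem, legal_cwwalk.mp hleg⟩
end
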